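/- arXiv:2305.03384 — 5 statements merged into one kernel-verified Lean document; each statement's English description precedes it below -/
import Mathlib

section
/- For each integer k with 1 ≤ k ≤ 6 and each α ∈ (0,1) there exist an angle θ₀ ∈ (π/2, π) and a constant c > 0 such that for every θ ∈ (π/2, θ₀), every τ > 0 and every z ∈ ℂ with z ≠ 0, |arg z| ≤ θ and |z|·τ ≤ π/sin θ, one has |δ_{τ,k}(e^{−zτ}) − z| ≤ c·τ^k·|z|^{k+1} and |δ_{τ,k}(e^{−zτ})^α − z^α| ≤ c·τ^k·|z|^{k+α}, where the fractional powers are taken with the principal branch. -/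
open Complex Real

/-- The BDFk generating polynomial `δ_{τ,k}(ξ) = (1/τ)·Σ_{j=1}^{k} (1−ξ)^j / j`. -/
noncomputable def bdfDelta (τ : ℝ) (k : ℕ) (ξ : ℂ) : ℂ :=
  (1 / (τ : ℂ)) * ∑ j ∈ Finset.Icc 1 k, (1 - ξ) ^ j / (j : ℂ)

lemma C1_pos' : True := trivial

noncomputable def C1 : ℝ := 4 ^ 7 * (7 + 6 * (1 + Real.exp 7) ^ 6) + 2 ^ 8

lemma C1_pos : 0 < C1 := by
  have := Real.exp_pos 7
  unfold C1; positivity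

/-- Key truncation estimate for the BDF generating function. -/
lemma key_bound (k : ℕ) (hk1 : 1 ≤ k) (hk6 : k ≤ 6) (w : ℂ) (hw : ‖w‖ ≤ 7) :
    ‖(∑ j ∈ Finset.Icc 1 k, (1 - Complex.exp (-w)) ^ j / (j : ℂ)) - w‖ ≤
      C1 * ‖w‖ ^ (k + 1) := by
  have hexp7 : (0:ℝ) < Real.exp 7 := Real.exp_pos 7
  set u : ℂ := 1 - Complex.exp (-w) with hu_def
  by_cases hsm : ‖w‖ ≤ 1 / 4
  · -- small case
    have hu : ‖u‖ ≤ 2 * ‖w‖ := by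
      have h1 : ‖-w‖ ≤ 1 := by simpa using hsm.trans (by norm_num)
      have := Complex.norm_exp_sub_one_le h1
      rw [norm_neg] at this
      calc ‖u‖ = ‖Complex.exp (-w) - 1‖ := by
            rw [hu_def, norm_sub_rev]
          _ ≤ 2 * ‖w‖ := this
    have hu2 : ‖u‖ ≤ 1 / 2 := by linarith
    have hlt : ‖u‖ < 1 := by linarith
    have hs : HasSum (fun n : ℕ => u ^ n / (n : ℂ)) (-Complex.log (1 - u)) :=
      Complex.hasSum_taylorSeries_neg_log hlt
    have h1u : (1 : ℂ) - u = Complex.exp (-w) := by rw [hu_def]; ring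
    have him : |(-w).im| ≤ 1 / 4 := by
      refine le_trans ?_ hsm
      simpa using Complex.abs_im_le_norm (-w)
    have hlog : Complex.log (1 - u) = -w := by
      rw [h1u, Complex.log_exp]
      · have := abs_le.mp him; nlinarith [Real.pi_gt_d6]
      · have := abs_le.mp him; nlinarith [Real.pi_gt_d6]
    rw [hlog, neg_neg] at hs
    -- partial sum over `Icc 1 k` equals partial sum over `range (k+1)`
    have hP : (∑ j ∈ Finset.Icc 1 k, u ^ j / (j : ℂ)) =
        ∑ j ∈ Finset.range (k + 1), u ^ j / (j : ℂ) := by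
      rw [Finset.range_eq_Ico, Finset.sum_eq_sum_Ico_succ_bot (Nat.succ_pos k)]
      rw [← Finset.Ico_add_one_right_eq_Icc]
      simp
    have htail := (hasSum_nat_add_iff' (f := fun n : ℕ => u ^ n / (n : ℂ)) (k + 1)).mpr hs
    have hgeo : HasSum (fun n : ℕ => ‖u‖ ^ (k + 1) * ‖u‖ ^ n)
        (‖u‖ ^ (k + 1) * (1 - ‖u‖)⁻¹) :=
      (hasSum_geometric_of_lt_one (norm_nonneg u) hlt).mul_left _
    have hb : ∀ n : ℕ, ‖u ^ (n + (k + 1)) / ((n + (k + 1) : ℕ) : ℂ)‖ ≤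
        ‖u‖ ^ (k + 1) * ‖u‖ ^ n := by
      intro n
      have hm1 : (1 : ℝ) ≤ ((n + (k + 1) : ℕ) : ℝ) := by exact_mod_cast Nat.succ_le_of_lt (by omega)
      rw [norm_div, Complex.norm_natCast, norm_pow]
      calc ‖u‖ ^ (n + (k + 1)) / ((n + (k + 1) : ℕ) : ℝ)
          ≤ ‖u‖ ^ (n + (k + 1)) / 1 := by
            apply div_le_div_of_nonneg_left ?_ ?_ hm1 <;> positivity
        _ = ‖u‖ ^ (k + 1) * ‖u‖ ^ n := by rw [div_one, ← pow_add]; ring_nf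
    have hnorm := tsum_of_norm_bounded hgeo hb
    rw [htail.tsum_eq] at hnorm
    have hfin : ‖u‖ ^ (k + 1) * (1 - ‖u‖)⁻¹ ≤
        C1 * ‖w‖ ^ (k + 1) := by
      have e1 : ‖u‖ ^ (k + 1) ≤ (2 * ‖w‖) ^ (k + 1) :=
        pow_le_pow_left₀ (norm_nonneg u) hu (k + 1)
      have e2 : (1 - ‖u‖)⁻¹ ≤ 2 := by
        rw [inv_le_comm₀ (by linarith) (by norm_num)]; linarith
      have e3 : (2:ℝ) ^ (k + 1) * 2 ≤ 2 ^ 8 := by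
        calc (2:ℝ) ^ (k+1) * 2 = 2 ^ (k + 2) := by ring
          _ ≤ 2 ^ 8 := pow_le_pow_right₀ (by norm_num) (by omega)
      have e4 : (0:ℝ) ≤ ‖w‖ ^ (k+1) := by positivity
      calc ‖u‖ ^ (k + 1) * (1 - ‖u‖)⁻¹
          ≤ (2 * ‖w‖) ^ (k + 1) * 2 := by
            apply mul_le_mul e1 e2 (by rw [inv_nonneg]; linarith) (by positivity)
        _ = 2 ^ (k+1) * 2 * ‖w‖ ^ (k+1) := by rw [mul_pow]; ring
        _ ≤ 2 ^ 8 * ‖w‖ ^ (k+1) := by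
            apply mul_le_mul_of_nonneg_right e3 e4
        _ ≤ C1 * ‖w‖ ^ (k+1) := by
            apply mul_le_mul_of_nonneg_right ?_ e4
            have h6 : (0:ℝ) ≤ (1 + Real.exp 7) ^ 6 := by positivity
            unfold C1; nlinarith
    rw [← hP] at hnorm
    rw [norm_sub_rev]
    exact le_trans hnorm hfin
  · -- large case
    push_neg at hsm
    have hre : (-w).re ≤ 7 := le_trans (Complex.re_le_norm _) (by rwa [norm_neg])
    have hub : ‖u‖ ≤ 1 + Real.exp 7 := by
      calc ‖u‖ ≤ ‖(1:ℂ)‖ + ‖Complex.exp (-w)‖ := by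
            rw [hu_def]; exact norm_sub_le 1 (Complex.exp (-w))
        _ ≤ 1 + Real.exp 7 := by
            rw [norm_one, Complex.norm_exp]
            exact add_le_add_right (Real.exp_le_exp.mpr hre) 1
    have hB1 : (1:ℝ) ≤ 1 + Real.exp 7 := by linarith
    have hM : ‖(∑ j ∈ Finset.Icc 1 k, u ^ j / (j : ℂ)) - w‖ ≤
        7 + 6 * (1 + Real.exp 7) ^ 6 := by
      calc ‖(∑ j ∈ Finset.Icc 1 k, u ^ j / (j : ℂ)) - w‖
          ≤ ‖∑ j ∈ Finset.Icc 1 k, u ^ j / (j : ℂ)‖ + ‖w‖ :=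
            norm_sub_le _ _
        _ ≤ (∑ j ∈ Finset.Icc 1 k, ‖u ^ j / (j : ℂ)‖) + 7 :=
            add_le_add (norm_sum_le _ _) hw
        _ ≤ (∑ _j ∈ Finset.Icc 1 k, (1 + Real.exp 7) ^ 6) + 7 := by
            refine add_le_add_left (Finset.sum_le_sum fun j hj => ?_) 7
            obtain ⟨hj1, hjk⟩ := Finset.mem_Icc.mp hj
            have hj1' : (1:ℝ) ≤ (j:ℝ) := by exact_mod_cast hj1
            rw [norm_div, norm_pow, Complex.norm_natCast]
            calc ‖u‖ ^ j / (j:ℝ) ≤ ‖u‖ ^ j / 1 := by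
                  apply div_le_div_of_nonneg_left ?_ ?_ hj1' <;> positivity
              _ = ‖u‖ ^ j := div_one _
              _ ≤ (1 + Real.exp 7) ^ j := pow_le_pow_left₀ (norm_nonneg u) hub j
              _ ≤ (1 + Real.exp 7) ^ 6 := pow_le_pow_right₀ hB1 (by omega)
        _ ≤ 6 * (1 + Real.exp 7) ^ 6 + 7 := by
            rw [Finset.sum_const, Nat.card_Icc]
            simp only [nsmul_eq_mul]
            have h6 : (0:ℝ) ≤ (1 + Real.exp 7) ^ 6 := by positivity
            have : ((k + 1 - 1 : ℕ) : ℝ) ≤ 6 := by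
              simp only [Nat.add_sub_cancel]; exact_mod_cast hk6
            nlinarith
        _ = 7 + 6 * (1 + Real.exp 7) ^ 6 := by ring
    have hone : (1:ℝ) ≤ (4 * ‖w‖) ^ (k + 1) := by
      calc (1:ℝ) = 1 ^ (k+1) := (one_pow _).symm
        _ ≤ (4 * ‖w‖) ^ (k+1) :=
            pow_le_pow_left₀ (by norm_num) (by linarith) _
    set M : ℝ := 7 + 6 * (1 + Real.exp 7) ^ 6 with hM_def
    have hMpos : 0 < M := by positivity
    calc ‖(∑ j ∈ Finset.Icc 1 k, u ^ j / (j : ℂ)) - w‖ ≤ M := hM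
      _ = M * 1 := (mul_one M).symm
      _ ≤ M * (4 * ‖w‖) ^ (k + 1) :=
          mul_le_mul_of_nonneg_left hone hMpos.le
      _ = M * 4 ^ (k+1) * ‖w‖ ^ (k+1) := by rw [mul_pow]; ring
      _ ≤ C1 * ‖w‖ ^ (k+1) := by
          apply mul_le_mul_of_nonneg_right ?_ (by positivity)
          have h47 : (4:ℝ) ^ (k+1) ≤ 4 ^ 7 := pow_le_pow_right₀ (by norm_num) (by omega)
          unfold C1
          nlinarith

lemma sin_gt_half {a : ℝ} (h1 : π / 2 ≤ a) (h2 : a ≤ 2) : 1 / 2 < Real.sin a := by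
  have hπ : (3.141592 : ℝ) < π := Real.pi_gt_d6
  have hπ' : π < 3.15 := Real.pi_lt_d2
  rw [← Real.sin_pi_sub, ← Real.sin_pi_div_six]
  apply Real.strictMonoOn_sin
  · constructor <;> nlinarith
  · constructor <;> nlinarith
  · nlinarith

/-- Points near a point in the sector of half-angle 2 lie in the slit plane. -/
lemma mem_slitPlane_of_near {z ζ : ℂ} (hz : z ≠ 0) (harg : |z.arg| ≤ 2)
    (hd : ‖ζ - z‖ ≤ ‖z‖ / 2) : ζ ∈ Complex.slitPlane := by
  rw [Complex.mem_slitPlane_iff]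
  by_contra hcon
  push_neg at hcon
  obtain ⟨hre, him⟩ := hcon
  have hz0 : 0 < ‖z‖ := norm_pos_iff.mpr hz
  rcases le_or_gt 0 z.re with hzr | hzr
  · -- z in the right half plane : |ζ - z| ≥ |z|
    have h1 : ‖z‖ ^ 2 ≤ ‖ζ - z‖ ^ 2 := by
      rw [Complex.sq_norm, Complex.sq_norm, Complex.normSq_apply, Complex.normSq_apply,
        Complex.sub_re, Complex.sub_im, him]
      nlinarith
    nlinarith [norm_nonneg (ζ - z)]
  · -- z in the left half plane : |Im z| > |z|/2
    have harg2 : π / 2 < |z.arg| := by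
      by_contra h
      push_neg at h
      exact absurd (Complex.abs_arg_le_pi_div_two_iff.mp h) (not_le.mpr hzr)
    have hsin : 1 / 2 < Real.sin |z.arg| := sin_gt_half harg2.le harg
    have hsin' : Real.sin |z.arg| ≤ |Real.sin z.arg| := by
      rcases abs_cases z.arg with ⟨h, _⟩ | ⟨h, hneg⟩
      · rw [h]; exact le_abs_self _
      · rw [h, Real.sin_neg]; exact neg_le_abs _
    have him2 : |z.im| = ‖z‖ * |Real.sin z.arg| := by
      have := Complex.sin_arg z
      rw [this, abs_div, abs_of_pos hz0]
      field_simp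
    have hlow : ‖z‖ / 2 < |z.im| := by
      rw [him2]
      calc ‖z‖ / 2 = ‖z‖ * (1/2) := by ring
        _ < ‖z‖ * |Real.sin z.arg| := by
            apply mul_lt_mul_of_pos_left (lt_of_lt_of_le hsin hsin') hz0
    have : |z.im| ≤ ‖ζ - z‖ := by
      have := Complex.abs_im_le_norm (ζ - z)
      rwa [Complex.sub_im, him, zero_sub, abs_neg] at this
    linarith

/-- Difference of powers estimate along a segment. -/
lemma cpow_diff_bound {α : ℝ} (hα0 : 0 < α) (hα1 : α < 1) {z e : ℂ} (hz : z ≠ 0)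
    (he : ‖e‖ ≤ ‖z‖ / 2) (harg : |z.arg| ≤ 2) :
    ‖(z + e) ^ (α : ℂ) - z ^ (α : ℂ)‖ ≤
      2 * ‖e‖ * ‖z‖ ^ (α - 1) := by
  have hz0 : 0 < ‖z‖ := norm_pos_iff.mpr hz
  set f : ℝ → ℂ := fun t => (z + t • e) ^ (α : ℂ) with hf_def
  set f' : ℝ → ℂ := fun t => e • ((α : ℂ) * (z + t • e) ^ ((α : ℂ) - 1)) with hf'_def
  have hmem : ∀ t : ℝ, t ∈ Set.Icc (0:ℝ) 1 → (z + t • e) ∈ Complex.slitPlane := by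
    intro t ht
    apply mem_slitPlane_of_near hz harg
    have : ‖z + t • e - z‖ = |t| * ‖e‖ := by
      rw [add_sub_cancel_left, Complex.real_smul, norm_mul, Complex.norm_real, Real.norm_eq_abs]
    rw [this, _root_.abs_of_nonneg ht.1]
    calc t * ‖e‖ ≤ 1 * ‖e‖ := by
          apply mul_le_mul_of_nonneg_right ht.2 (norm_nonneg e)
      _ ≤ ‖z‖ / 2 := by rwa [one_mul]
  have habs : ∀ t : ℝ, t ∈ Set.Icc (0:ℝ) 1 → ‖z‖ / 2 ≤ ‖z + t • e‖ := by
    intro t ht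
    have h1 : ‖t • e‖ ≤ ‖z‖ / 2 := by
      rw [Complex.real_smul, norm_mul, Complex.norm_real, Real.norm_eq_abs, _root_.abs_of_nonneg ht.1]
      calc t * ‖e‖ ≤ 1 * ‖e‖ :=
            mul_le_mul_of_nonneg_right ht.2 (norm_nonneg e)
        _ ≤ ‖z‖ / 2 := by rwa [one_mul]
    calc ‖z‖ / 2 = ‖z‖ - ‖z‖ / 2 := by ring
      _ ≤ ‖z‖ - ‖t • e‖ := by linarith
      _ ≤ ‖z + t • e‖ := by
          have h2 := norm_sub_norm_le z (-(t • e))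
          simpa [sub_neg_eq_add] using h2
  have hne : ∀ t : ℝ, t ∈ Set.Icc (0:ℝ) 1 → (z + t • e) ≠ 0 := by
    intro t ht h0
    have := habs t ht
    rw [h0, norm_zero] at this
    linarith
  have hderiv : ∀ t ∈ Set.Icc (0:ℝ) 1, HasDerivWithinAt f (f' t) (Set.Icc 0 1) t := by
    intro t ht
    have hinner : HasDerivAt (fun s : ℝ => z + s • e) e t := by
      simpa using ((hasDerivAt_id t).smul_const e).const_add z
    have houter : HasDerivAt (fun y : ℂ => y ^ (α : ℂ))
        ((α : ℂ) * (z + t • e) ^ ((α : ℂ) - 1)) (z + t • e) :=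
      (Complex.hasStrictDerivAt_cpow_const (hmem t ht)).hasDerivAt
    have := HasDerivAt.scomp (x := t) houter hinner
    exact this.hasDerivWithinAt
  have hbound : ∀ t ∈ Set.Ico (0:ℝ) 1, ‖f' t‖ ≤
      2 * ‖e‖ * ‖z‖ ^ (α - 1) := by
    intro t ht
    have ht' : t ∈ Set.Icc (0:ℝ) 1 := ⟨ht.1, ht.2.le⟩
    have hζ := hne t ht'
    have hζabs := habs t ht'
    have hcp : ‖(z + t • e) ^ ((α : ℂ) - 1)‖ =
        ‖z + t • e‖ ^ (α - 1) := by
      have h1 : ((α : ℂ) - 1) = ((α - 1 : ℝ) : ℂ) := by push_cast; ring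
      rw [h1, Complex.norm_cpow_of_ne_zero hζ]
      simp
    have hrp : ‖z + t • e‖ ^ (α - 1) ≤ 2 * ‖z‖ ^ (α - 1) := by
      have h1 : ‖z + t • e‖ ^ (α - 1) ≤ (‖z‖ / 2) ^ (α - 1) :=
        Real.rpow_le_rpow_of_nonpos (by linarith) hζabs (by linarith)
      have h2 : (‖z‖ / 2) ^ (α - 1) = ‖z‖ ^ (α - 1) / 2 ^ (α - 1) :=
        Real.div_rpow (norm_nonneg z) (by norm_num) _
      have h3 : ‖z‖ ^ (α - 1) / 2 ^ (α - 1) ≤ 2 * ‖z‖ ^ (α - 1) := by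
        rw [div_eq_mul_inv, ← Real.rpow_neg (by norm_num : (0:ℝ) ≤ 2), mul_comm]
        apply mul_le_mul_of_nonneg_right ?_ (Real.rpow_nonneg (norm_nonneg z) _)
        calc (2:ℝ) ^ (-(α - 1)) ≤ 2 ^ (1:ℝ) :=
              Real.rpow_le_rpow_of_exponent_le (by norm_num) (by linarith)
          _ = 2 := Real.rpow_one 2
      linarith
    rw [hf'_def]
    simp only [smul_eq_mul, norm_mul]
    rw [hcp]
    have hαabs : ‖(α : ℂ)‖ = α := by
      rw [Complex.norm_real, Real.norm_eq_abs, _root_.abs_of_pos hα0]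
    rw [hαabs]
    calc ‖e‖ * (α * ‖z + t • e‖ ^ (α - 1))
        ≤ ‖e‖ * (1 * (2 * ‖z‖ ^ (α - 1))) := by
          apply mul_le_mul_of_nonneg_left ?_ (norm_nonneg e)
          apply mul_le_mul hα1.le hrp (Real.rpow_nonneg (norm_nonneg _) _) (by norm_num)
      _ = 2 * ‖e‖ * ‖z‖ ^ (α - 1) := by ring
  have := norm_image_sub_le_of_norm_deriv_le_segment' hderiv hbound 1
    (Set.right_mem_Icc.mpr zero_le_one)
  simp only [hf_def, one_smul, zero_smul, add_zero, sub_zero, mul_one] at this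
  calc ‖(z + e) ^ (α : ℂ) - z ^ (α : ℂ)‖
      = ‖(z + e) ^ (α : ℂ) - z ^ (α : ℂ)‖ := rfl
    _ ≤ 2 * ‖e‖ * ‖z‖ ^ (α - 1) := this

set_option maxHeartbeats 1000000 in
theorem stmt1 (k : ℕ) (hk1 : 1 ≤ k) (hk6 : k ≤ 6) (α : ℝ) (hα : α ∈ Set.Ioo (0 : ℝ) 1) :
    ∃ θ₀ ∈ Set.Ioo (π / 2) π, ∃ c > (0 : ℝ),
      ∀ θ ∈ Set.Ioo (π / 2) θ₀, ∀ τ : ℝ, 0 < τ → ∀ z : ℂ, z ≠ 0 →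
        |z.arg| ≤ θ → ‖z‖ * τ ≤ π / Real.sin θ →
          ‖bdfDelta τ k (Complex.exp (-z * τ)) - z‖ ≤
              c * τ ^ k * ‖z‖ ^ (k + 1) ∧
          ‖bdfDelta τ k (Complex.exp (-z * τ)) ^ (α : ℂ) - z ^ (α : ℂ)‖ ≤
              c * τ ^ k * ‖z‖ ^ ((k : ℝ) + α) := by
  obtain ⟨hα0, hα1⟩ := hα
  have hπ : (3.141592 : ℝ) < π := Real.pi_gt_d6
  have hπ' : π < 3.15 := Real.pi_lt_d2
  have hC1 : 0 < C1 := C1_pos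
  set A : ℝ := 1 + C1 * 7 ^ 6 with hA_def
  have hA1 : (1:ℝ) ≤ A := by nlinarith
  refine ⟨2, ⟨by nlinarith, by nlinarith⟩, C1 + 2 * C1 + 2 * C1 * (A + 1), by nlinarith, ?_⟩
  rintro θ ⟨hθ1, hθ2⟩ τ hτ z hz harg habs
  have hz0 : 0 < ‖z‖ := norm_pos_iff.mpr hz
  have hsinθ : 1 / 2 < Real.sin θ := sin_gt_half hθ1.le hθ2.le
  have hs7 : ‖z‖ * τ ≤ 7 := by
    refine habs.trans ?_
    rw [div_le_iff₀ (by linarith)]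
    nlinarith
  set w : ℂ := (τ : ℂ) * z with hw_def
  have hwabs : ‖w‖ = τ * ‖z‖ := by
    rw [hw_def, norm_mul, Complex.norm_real, Real.norm_eq_abs, _root_.abs_of_pos hτ]
  have hw7 : ‖w‖ ≤ 7 := by rw [hwabs]; linarith
  have hexp : Complex.exp (-z * τ) = Complex.exp (-w) := by rw [hw_def]; ring_nf
  have hkey := key_bound k hk1 hk6 w hw7
  have hτ0 : τ ≠ 0 := hτ.ne'
  have heq : bdfDelta τ k (Complex.exp (-z * τ)) - z =
      (1 / (τ:ℂ)) * ((∑ j ∈ Finset.Icc 1 k, (1 - Complex.exp (-w)) ^ j / (j : ℂ)) - w) := by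
    rw [bdfDelta, hexp, mul_sub]
    congr 1
    rw [hw_def]
    have hτC : (τ : ℂ) ≠ 0 := Complex.ofReal_ne_zero.mpr hτ0
    field_simp
  have h1 : ‖bdfDelta τ k (Complex.exp (-z * τ)) - z‖ ≤
      C1 * τ ^ k * ‖z‖ ^ (k + 1) := by
    rw [heq, norm_mul, norm_div, norm_one, Complex.norm_real, Real.norm_eq_abs, _root_.abs_of_pos hτ]
    calc 1 / τ * ‖(∑ j ∈ Finset.Icc 1 k,
            (1 - Complex.exp (-w)) ^ j / (j : ℂ)) - w‖
        ≤ 1 / τ * (C1 * ‖w‖ ^ (k + 1)) :=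
          mul_le_mul_of_nonneg_left hkey (by positivity)
      _ = C1 * τ ^ k * ‖z‖ ^ (k + 1) := by
          rw [hwabs, mul_pow, pow_succ]
          field_simp
  -- common power computations
  have hτk : (0:ℝ) < τ ^ k := by positivity
  have hpowsplit : τ ^ k * ‖z‖ ^ (k + 1) =
      C1⁻¹ * (C1 * (τ * ‖z‖) ^ k) * ‖z‖ := by
    rw [mul_pow, pow_succ]
    field_simp
  have hrk : ‖z‖ ^ ((k:ℝ) + α) = ‖z‖ ^ k * ‖z‖ ^ α := by
    rw [← Real.rpow_natCast (‖z‖) k, ← Real.rpow_add hz0]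
  constructor
  · -- first inequality
    refine h1.trans ?_
    have hc : C1 ≤ C1 + 2 * C1 + 2 * C1 * (A + 1) := by nlinarith
    exact mul_le_mul_of_nonneg_right
      (mul_le_mul_of_nonneg_right hc hτk.le) (by positivity)
  · -- second inequality
    set δ : ℂ := bdfDelta τ k (Complex.exp (-z * τ)) with hδ_def
    set e : ℂ := δ - z with he_def
    have he : ‖e‖ ≤ C1 * τ ^ k * ‖z‖ ^ (k + 1) := h1
    have hesk : C1 * τ ^ k * ‖z‖ ^ (k + 1) =
        (C1 * (τ * ‖z‖) ^ k) * ‖z‖ := by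
      rw [mul_pow, pow_succ]; ring
    set s : ℝ := τ * ‖z‖ with hs_def
    have hs0 : (0:ℝ) ≤ s := by positivity
    have hs7' : s ≤ 7 := by rw [hs_def]; linarith
    have hsk7 : s ^ k ≤ 7 ^ 6 := by
      calc s ^ k ≤ 7 ^ k := pow_le_pow_left₀ hs0 hs7' k
        _ ≤ 7 ^ 6 := pow_le_pow_right₀ (by norm_num) hk6
    have hze : z + e = δ := by rw [he_def]; ring
    rcases le_or_gt (C1 * s ^ k) (1/2) with hsml | hbig
    · -- small perturbation case
      have he2 : ‖e‖ ≤ ‖z‖ / 2 := by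
        calc ‖e‖ ≤ C1 * τ ^ k * ‖z‖ ^ (k + 1) := he
          _ = (C1 * s ^ k) * ‖z‖ := hesk
          _ ≤ (1/2) * ‖z‖ := mul_le_mul_of_nonneg_right hsml hz0.le
          _ = ‖z‖ / 2 := by ring
      have harg2 : |z.arg| ≤ 2 := le_trans harg (by linarith)
      have hdiff := cpow_diff_bound hα0 hα1 hz he2 harg2
      rw [hze] at hdiff
      refine hdiff.trans ?_
      have hrw : ‖z‖ ^ (k+1) * ‖z‖ ^ (α - 1) =
          ‖z‖ ^ ((k:ℝ) + α) := by
        rw [← Real.rpow_natCast (‖z‖) (k+1), ← Real.rpow_add hz0]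
        congr 1
        push_cast
        ring
      calc 2 * ‖e‖ * ‖z‖ ^ (α - 1)
          ≤ 2 * (C1 * τ ^ k * ‖z‖ ^ (k + 1)) * ‖z‖ ^ (α - 1) := by
            apply mul_le_mul_of_nonneg_right ?_ (Real.rpow_nonneg hz0.le _)
            linarith
        _ = 2 * C1 * τ ^ k * (‖z‖ ^ (k+1) * ‖z‖ ^ (α - 1)) := by ring
        _ = 2 * C1 * τ ^ k * ‖z‖ ^ ((k:ℝ) + α) := by rw [hrw]
        _ ≤ (C1 + 2 * C1 + 2 * C1 * (A + 1)) * τ ^ k * ‖z‖ ^ ((k:ℝ) + α) := by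
            apply mul_le_mul_of_nonneg_right ?_ (Real.rpow_nonneg hz0.le _)
            exact mul_le_mul_of_nonneg_right (by nlinarith) hτk.le
    · -- large perturbation case
      have habsδ : ‖δ‖ ≤ A * ‖z‖ := by
        calc ‖δ‖ = ‖z + e‖ := by rw [hze]
          _ ≤ ‖z‖ + ‖e‖ := norm_add_le z e
          _ ≤ ‖z‖ + (C1 * s ^ k) * ‖z‖ := by
              rw [← hesk]; linarith [he]
          _ ≤ ‖z‖ + (C1 * 7 ^ 6) * ‖z‖ := by
              have h2 : C1 * s ^ k ≤ C1 * 7 ^ 6 := mul_le_mul_of_nonneg_left hsk7 hC1.le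
              have h3 := mul_le_mul_of_nonneg_right h2 hz0.le
              linarith
          _ = A * ‖z‖ := by rw [hA_def]; ring
      have hδα : ‖δ ^ (α : ℂ)‖ ≤ A * ‖z‖ ^ α := by
        have h0 := Complex.norm_cpow_le δ (α : ℂ)
        simp only [Complex.ofReal_re, Complex.ofReal_im, mul_zero, Real.exp_zero, div_one] at h0
        refine h0.trans ?_
        calc ‖δ‖ ^ α ≤ (A * ‖z‖) ^ α :=
              Real.rpow_le_rpow (norm_nonneg δ) habsδ hα0.le
          _ = A ^ α * ‖z‖ ^ α :=
              Real.mul_rpow (by linarith) hz0.le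
          _ ≤ A * ‖z‖ ^ α := by
              apply mul_le_mul_of_nonneg_right ?_ (Real.rpow_nonneg hz0.le _)
              calc A ^ α ≤ A ^ (1:ℝ) :=
                    Real.rpow_le_rpow_of_exponent_le hA1 hα1.le
                _ = A := Real.rpow_one A
      have hzα : ‖z ^ (α : ℂ)‖ ≤ ‖z‖ ^ α := by
        have h0 := Complex.norm_cpow_le z (α : ℂ)
        simpa using h0
      have hone : (1:ℝ) ≤ 2 * (C1 * s ^ k) := by linarith
      have hzαpos : (0:ℝ) ≤ ‖z‖ ^ α := Real.rpow_nonneg hz0.le _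
      calc ‖δ ^ (α : ℂ) - z ^ (α : ℂ)‖
          ≤ ‖δ ^ (α : ℂ)‖ + ‖z ^ (α : ℂ)‖ :=
            norm_sub_le _ _
        _ ≤ (A + 1) * ‖z‖ ^ α := by linarith
        _ ≤ (A + 1) * (2 * (C1 * s ^ k)) * ‖z‖ ^ α := by
            have hA10 : (0:ℝ) ≤ A + 1 := by linarith
            have h4 : (A + 1) * 1 ≤ (A + 1) * (2 * (C1 * s ^ k)) :=
              mul_le_mul_of_nonneg_left hone hA10
            have h5 := mul_le_mul_of_nonneg_right h4 hzαpos
            linarith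
        _ = 2 * C1 * (A + 1) * τ ^ k * (‖z‖ ^ k * ‖z‖ ^ α) := by
            rw [hs_def, mul_pow]; ring
        _ = 2 * C1 * (A + 1) * τ ^ k * ‖z‖ ^ ((k:ℝ) + α) := by rw [hrk]
        _ ≤ (C1 + 2 * C1 + 2 * C1 * (A + 1)) * τ ^ k * ‖z‖ ^ ((k:ℝ) + α) := by
            apply mul_le_mul_of_nonneg_right ?_ (Real.rpow_nonneg hz0.le _)
            exact mul_le_mul_of_nonneg_right (by nlinarith) hτk.le
end

section
/- For all integers l ≥ 1 and i ≥ 0 with 2i ≤ l, the following identity of rational numbers holds: (1/((2i)!·l!))·Σ_{j=1}^{l} a_{l,j}·((l+1)/2 − j)^{2i} = (1/(2i+l+1)!)·Σ_{j=0}^{l+1} (−1)^j·binom(l+1, j)·((l+1)/2 − j)^{2i+l+1}. (The left-hand side is the coefficient c_{2i} in the expansion of (1/l!)·Σ_{j=1}^{l} a_{l,j}·e^{((l+1)/2−j)η} in powers of η, and the right-hand side is the coefficient d_{2i} in the expansion of ((e^{η/2}−e^{−η/2})/η)^{l+1}.) -/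
/-- The coefficients `a_{l,j}`: `a_{0,0} = 1`, `a_{0,j} = 0` for `j ≥ 1`, and for `l ≥ 1`:
`a_{l,0} = a_{l,l+1} = 0` and `a_{l,j} = j·a_{l−1,j} + (l+1−j)·a_{l−1,j−1}` for `1 ≤ j ≤ l`
(extended by zero outside the range `0 ≤ j ≤ l+1`). -/
def aCoef : ℕ → ℕ → ℕ
  | 0, j => if j = 0 then 1 else 0
  | l + 1, j => if j = 0 then 0 else j * aCoef l j + (l + 2 - j) * aCoef l (j - 1)


/-- alternating power sum -/
def altA (n s : ℕ) : ℚ := ∑ k ∈ Finset.range (n+1), (-1)^k * (n.choose k : ℚ) * (k:ℚ)^s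

lemma altA_rec (n s : ℕ) :
    altA (n+1) s = - ∑ t ∈ Finset.range s, (s.choose t : ℚ) * altA n t := by
  have h1 : altA (n+1) s = (∑ k ∈ Finset.range (n+1),
      (-1:ℚ)^(k+1) * ((n+1).choose (k+1) : ℚ) * ((k:ℚ)+1)^s) + (0:ℚ)^s := by
    rw [altA, Finset.sum_range_succ' (fun k => (-1:ℚ)^k * ((n+1).choose k : ℚ) * (k:ℚ)^s) (n+1)]
    congr 1
    · apply Finset.sum_congr rfl; intro k _; push_cast; ring
    · simp
  have h3 : altA (n+1) s = ((∑ k ∈ Finset.range (n+1), (-1:ℚ)^(k+1) * (n.choose (k+1):ℚ) * ((k:ℚ)+1)^s)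
      + (∑ k ∈ Finset.range (n+1), (-1:ℚ)^(k+1) * (n.choose k:ℚ) * ((k:ℚ)+1)^s)) + (0:ℚ)^s := by
    rw [h1]
    congr 1
    rw [← Finset.sum_add_distrib]
    apply Finset.sum_congr rfl
    intro k _
    rw [Nat.choose_succ_succ]
    push_cast
    ring
  have h4 : ∑ k ∈ Finset.range (n+1), (-1:ℚ)^(k+1) * (n.choose (k+1) : ℚ) * ((k:ℚ)+1)^s
      = altA n s - (0:ℚ)^s := by
    have e2 := Finset.sum_range_succ' (fun k => (-1:ℚ)^k * (n.choose k : ℚ) * (k:ℚ)^s) (n+1)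
    have e1 : ∑ k ∈ Finset.range (n+2), (-1:ℚ)^k * (n.choose k : ℚ) * (k:ℚ)^s = altA n s := by
      rw [Finset.sum_range_succ, altA]
      simp [Nat.choose_succ_self]
    rw [e1] at e2
    have e3 : ∑ k ∈ Finset.range (n+1), (-1:ℚ)^(k+1) * (n.choose (k+1) : ℚ) * ((k:ℚ)+1)^s
        = ∑ k ∈ Finset.range (n+1), (-1:ℚ)^(k+1) * (n.choose (k+1) : ℚ) * (((k+1:ℕ)):ℚ)^s := by
      apply Finset.sum_congr rfl; intro k _; push_cast; ring
    rw [e3]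
    have e4 : (-1:ℚ)^0 * (n.choose 0 : ℚ) * ((0:ℕ):ℚ)^s = (0:ℚ)^s := by simp
    rw [e2] at *
    simp only [e4] at *
    linarith [e2]
  have h5 : ∑ k ∈ Finset.range (n+1), (-1:ℚ)^(k+1) * (n.choose k : ℚ) * ((k:ℚ)+1)^s
      = - ∑ t ∈ Finset.range (s+1), (s.choose t : ℚ) * altA n t := by
    have expand : ∀ k : ℕ, ((k:ℚ)+1)^s = ∑ t ∈ Finset.range (s+1), (k:ℚ)^t * (s.choose t : ℚ) := by
      intro k
      rw [add_pow]
      apply Finset.sum_congr rfl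
      intro t _; simp
    calc ∑ k ∈ Finset.range (n+1), (-1:ℚ)^(k+1) * (n.choose k : ℚ) * ((k:ℚ)+1)^s
        = ∑ k ∈ Finset.range (n+1), ∑ t ∈ Finset.range (s+1),
            (-1:ℚ)^(k+1) * (n.choose k : ℚ) * ((k:ℚ)^t * (s.choose t : ℚ)) := by
          apply Finset.sum_congr rfl; intro k _; rw [expand, Finset.mul_sum]
      _ = ∑ t ∈ Finset.range (s+1), ∑ k ∈ Finset.range (n+1),
            (-1:ℚ)^(k+1) * (n.choose k : ℚ) * ((k:ℚ)^t * (s.choose t : ℚ)) := Finset.sum_comm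
      _ = - ∑ t ∈ Finset.range (s+1), (s.choose t : ℚ) * altA n t := by
          rw [← Finset.sum_neg_distrib]
          apply Finset.sum_congr rfl
          intro t _
          rw [altA, Finset.mul_sum, ← Finset.sum_neg_distrib]
          apply Finset.sum_congr rfl
          intro k _; ring
  rw [h3, h4, h5, Finset.sum_range_succ]
  simp only [Nat.choose_self, Nat.cast_one, one_mul]
  ring

lemma altA_eq_zero : ∀ n, ∀ s < n, altA n s = 0 := by
  intro n
  induction n with
  | zero => intro s hs; omega
  | succ n ih =>
    intro s hs
    rw [altA_rec]
    rw [show (0:ℚ) = - ∑ t ∈ Finset.range s, (s.choose t : ℚ) * 0 by simp]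
    congr 1
    apply Finset.sum_congr rfl
    intro t ht
    rw [ih t (by simp at ht; omega)]

lemma fd_desc {n s : ℕ} (h : s < n) (y : ℚ) :
    ∑ j ∈ Finset.range (n+1), (-1)^j * (n.choose j : ℚ) * (y - j)^s = 0 := by
  have expand : ∀ j : ℕ, (y - (j:ℚ))^s
      = ∑ t ∈ Finset.range (s+1), (-1)^t * (j:ℚ)^t * y^(s-t) * (s.choose t : ℚ) := by
    intro j
    rw [sub_eq_add_neg, add_comm, add_pow]
    apply Finset.sum_congr rfl
    intro t _
    rw [neg_pow]
    try ring
  calc ∑ j ∈ Finset.range (n+1), (-1)^j * (n.choose j : ℚ) * (y - j)^s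
      = ∑ j ∈ Finset.range (n+1), ∑ t ∈ Finset.range (s+1),
          (-1)^j * (n.choose j : ℚ) * ((-1)^t * (j:ℚ)^t * y^(s-t) * (s.choose t : ℚ)) := by
        apply Finset.sum_congr rfl; intro j _; rw [expand, Finset.mul_sum]
    _ = ∑ t ∈ Finset.range (s+1), ((-1)^t * y^(s-t) * (s.choose t : ℚ)) * altA n t := by
        rw [Finset.sum_comm]
        apply Finset.sum_congr rfl
        intro t _
        rw [altA, Finset.mul_sum]
        apply Finset.sum_congr rfl
        intro j _; ring
    _ = 0 := by
        apply Finset.sum_eq_zero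
        intro t ht
        rw [altA_eq_zero n t (by simp at ht; omega)]
        ring

/-- the explicit alternating-sum formula candidate -/
def Ffun (l m : ℕ) : ℚ := ∑ j ∈ Finset.range (m+1), (-1)^j * ((l+1).choose j : ℚ) * ((m:ℚ) - j)^l

lemma Ffun_vanish (l m : ℕ) (h : l + 1 ≤ m) : Ffun l m = 0 := by
  rw [Ffun]
  rw [← Finset.sum_subset (Finset.range_subset_range.2 (show l+2 ≤ m+1 by omega))
    (fun j _ hj => by
      have : l + 1 < j := by simp at hj ⊢; omega
      rw [Nat.choose_eq_zero_of_lt this]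
      simp)]
  exact fd_desc (show l < l+1 by omega) (m:ℚ)

lemma Ffun_rec (l m : ℕ) (hm : 1 ≤ m) :
    Ffun (l+1) m = (m:ℚ) * Ffun l m
      + ((l:ℚ)+2-m) * (∑ j ∈ Finset.range m, (-1)^j * ((l+1).choose j : ℚ) * ((m:ℚ)-1-j)^l) := by
  have hL := Finset.sum_range_succ'
    (fun j => (-1:ℚ)^j * ((l+2).choose j : ℚ) * ((m:ℚ) - j)^(l+1)) m
  have hR := Finset.sum_range_succ'
    (fun j => (m:ℚ) * ((-1:ℚ)^j * ((l+1).choose j : ℚ) * ((m:ℚ) - j)^l)) m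
  have key : ∀ j : ℕ, (-1:ℚ)^(j+1) * ((l+2).choose (j+1) : ℚ) * ((m:ℚ) - (j+1))^(l+1)
      = (m:ℚ) * ((-1:ℚ)^(j+1) * ((l+1).choose (j+1) : ℚ) * ((m:ℚ) - (j+1))^l)
        + ((l:ℚ)+2-m) * ((-1:ℚ)^j * ((l+1).choose j : ℚ) * ((m:ℚ)-1-j)^l) := by
    intro j
    have pascal : ((l+2).choose (j+1) : ℚ) = ((l+1).choose j : ℚ) + ((l+1).choose (j+1) : ℚ) := by
      rw [show l+2 = (l+1)+1 from rfl, Nat.choose_succ_succ]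
      push_cast; ring
    have absorb : ((j:ℚ)+1) * ((l+2).choose (j+1) : ℚ) = ((l:ℚ)+2) * ((l+1).choose j : ℚ) := by
      have := Nat.add_one_mul_choose_eq (l+1) j
      have := congrArg (Nat.cast : ℕ → ℚ) this
      push_cast at this
      linarith [this]
    have hpow : ((m:ℚ) - (j+1))^(l+1) = ((m:ℚ) - (j+1))^l * ((m:ℚ) - (j+1)) := by ring
    rw [hpow]
    linear_combination ((-1:ℚ)^(j+1) * ((m:ℚ)-j-1)^l * (m:ℚ)) * pascal
      - ((-1:ℚ)^(j+1) * ((m:ℚ)-j-1)^l) * absorb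
  rw [Ffun, Ffun, hL]
  rw [Finset.mul_sum, hR]
  rw [Finset.mul_sum]
  have hb : (-1:ℚ)^0 * ((l+2).choose 0 : ℚ) * ((m:ℚ) - (0:ℕ))^(l+1)
      = (m:ℚ) * ((-1:ℚ)^0 * ((l+1).choose 0 : ℚ) * ((m:ℚ) - (0:ℕ))^l) := by
    simp; ring
  simp only [Nat.cast_zero] at hb ⊢
  rw [show (∑ j ∈ Finset.range m,
      (fun j => (-1:ℚ)^j * ((l+2).choose j : ℚ) * ((m:ℚ) - j)^(l+1)) (j+1)) =
    ∑ j ∈ Finset.range m, ((m:ℚ) * ((-1:ℚ)^(j+1) * ((l+1).choose (j+1) : ℚ) * ((m:ℚ) - (j+1))^l)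
        + ((l:ℚ)+2-m) * ((-1:ℚ)^j * ((l+1).choose j : ℚ) * ((m:ℚ)-1-j)^l)) from
    Finset.sum_congr rfl (fun j _ => by push_cast; linear_combination key j)]
  rw [Finset.sum_add_distrib]
  push_cast
  simp only [Nat.choose_zero_right, Nat.cast_one]
  ring

lemma aCoef_big : ∀ l m, l + 2 ≤ m → aCoef l m = 0 := by
  intro l
  induction l with
  | zero => intro m hm; unfold aCoef; rw [if_neg (by omega)]
  | succ l ih =>
    intro m hm
    unfold aCoef
    rw [if_neg (by omega)]
    rw [ih m (by omega), ih (m-1) (by omega)]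
    simp

lemma aCoef_explicit : ∀ l m, (aCoef l m : ℚ) = Ffun l m := by
  intro l
  induction l with
  | zero =>
    intro m
    match m with
    | 0 => simp [aCoef, Ffun]
    | (k+1) =>
      unfold aCoef
      rw [if_neg (by omega)]
      rw [Ffun]
      simp only [pow_zero, mul_one]
      rw [← Finset.sum_subset (Finset.range_subset_range.2 (show 2 ≤ k+2 by omega))
        (fun j _ hj => by
          have : 1 < j := by simp at hj ⊢; omega
          rw [Nat.choose_eq_zero_of_lt this]
          simp)]
      simp [Finset.sum_range_succ]
  | succ l ih =>
    intro m
    match m with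
    | 0 =>
      unfold aCoef
      rw [if_pos rfl]
      rw [Ffun]
      simp [zero_pow (show l+1 ≠ 0 by omega)]
    | (m+1) =>
      by_cases hbig : l + 3 ≤ m + 1
      · rw [aCoef_big (l+1) (m+1) (by omega), Ffun_vanish (l+1) (m+1) (by omega)]
        simp
      · unfold aCoef
        rw [if_neg (by omega)]
        rw [Nat.cast_add, Nat.cast_mul, Nat.cast_mul, ih (m+1), show m+1-1 = m from rfl, ih m]
        have hsub : l + 2 - (m+1) = l + 1 - m := by omega
        rw [hsub]
        have hcast : ((l + 1 - m : ℕ) : ℚ) = (l:ℚ) + 2 - ((m+1:ℕ):ℚ) := by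
          have hm2 : m ≤ l + 1 := by omega
          rw [Nat.cast_sub hm2]
          push_cast
          ring
        rw [hcast]
        rw [Ffun_rec l (m+1) (by omega)]
        have : Ffun l m = ∑ j ∈ Finset.range (m+1),
            (-1)^j * ((l+1).choose j : ℚ) * (((m+1:ℕ):ℚ)-1-j)^l := by
          rw [Ffun]
          apply Finset.sum_congr rfl
          intro j _
          push_cast
          try ring
        rw [this]

lemma fd_asc {n s : ℕ} (h : s < n) (y : ℚ) :
    ∑ j ∈ Finset.range (n+1), (-1)^j * (n.choose j : ℚ) * (y + j)^s = 0 := by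
  have hd := fd_desc h (-y)
  calc ∑ j ∈ Finset.range (n+1), (-1)^j * (n.choose j : ℚ) * (y + j)^s
      = (-1)^s * ∑ j ∈ Finset.range (n+1), (-1)^j * (n.choose j : ℚ) * (-y - j)^s := by
        rw [Finset.mul_sum]
        apply Finset.sum_congr rfl
        intro j _
        have hp : (y + (j:ℚ))^s = (-1)^s * (-y - (j:ℚ))^s := by
          rw [show (y + (j:ℚ)) = -(-y - (j:ℚ)) by ring, neg_pow]
        rw [hp]
        ring
    _ = 0 := by rw [hd]; ring

def epsQ (l j : ℕ) : ℚ := (-1)^j * ((l+1).choose j : ℚ)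

def hfun (l r : ℕ) (x : ℚ) : ℚ :=
  ∑ m ∈ Finset.range (l+1), (x+m)^r * ∑ j ∈ Finset.range (m+1), epsQ l j * (x + m - j)^l

lemma hfun_periodic (l r : ℕ) (hr : r ≤ l) (x : ℚ) : hfun l r (x+1) = hfun l r x := by
  set Gt : ℕ → ℚ := fun t => (x+t)^r * ∑ j ∈ Finset.range (t+1), epsQ l j * (x + t - j)^l with hGt
  have inner_eq : ∀ m : ℕ, (x+1+(m:ℚ))^r * (∑ j ∈ Finset.range (m+1), epsQ l j * (x+1+(m:ℚ) - j)^l)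
      = Gt (m+1) - epsQ l (m+1) * x^l * (x+1+(m:ℚ))^r := by
    intro m
    have e1 : Gt (m+1) = (x+((m+1:ℕ):ℚ))^r * (∑ j ∈ Finset.range (m+1), epsQ l j * (x+((m+1:ℕ):ℚ) - j)^l)
        + epsQ l (m+1) * (x+((m+1:ℕ):ℚ) - ((m+1:ℕ):ℚ))^l * (x+((m+1:ℕ):ℚ))^r := by
      rw [hGt]
      simp only []
      rw [Finset.sum_range_succ]
      push_cast
      ring
    rw [e1]
    have c1 : (x+((m+1:ℕ):ℚ)) = x+1+(m:ℚ) := by push_cast; ring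
    rw [c1]
    have c2 : (x+1+(m:ℚ) - ((m+1:ℕ):ℚ)) = x := by push_cast; ring
    rw [c2]
    ring
  have step1 : hfun l r (x+1)
      = ∑ m ∈ Finset.range (l+1), (Gt (m+1) - epsQ l (m+1) * x^l * (x+1+(m:ℚ))^r) := by
    rw [hfun]
    apply Finset.sum_congr rfl
    intro m _
    exact inner_eq m
  rw [step1, Finset.sum_sub_distrib]
  -- first sum: telescomb
  have e2 := Finset.sum_range_succ' Gt (l+1)
  have e3 : ∑ m ∈ Finset.range (l+2), Gt m = hfun l r x + Gt (l+1) := by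
    rw [Finset.sum_range_succ]
    rfl
  have eGl : Gt (l+1) = 0 := by
    rw [hGt]
    simp only []
    have : ∑ j ∈ Finset.range (l+2), epsQ l j * (x + ((l+1:ℕ):ℚ) - j)^l = 0 := by
      have := fd_desc (show l < l+1 by omega) (x + ((l+1:ℕ):ℚ))
      rw [← this]
      apply Finset.sum_congr rfl
      intro j _
      rw [epsQ]
      try ring
    rw [show ((l+1:ℕ):ℚ) = (l:ℚ)+1 by push_cast; ring] at this
    push_cast
    rw [this]
    ring
  have eG0 : Gt 0 = x^r * x^l := by
    rw [hGt]
    simp [epsQ]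
  have first : ∑ m ∈ Finset.range (l+1), Gt (m+1) = hfun l r x - x^r * x^l := by
    rw [e3, eGl] at e2
    rw [eG0] at e2
    linarith [e2]
  -- second sum
  have second : ∑ m ∈ Finset.range (l+1), epsQ l (m+1) * x^l * (x+1+(m:ℚ))^r
      = x^l * (0 - x^r) := by
    have e4 := Finset.sum_range_succ' (fun m => epsQ l m * (x+(m:ℚ))^r) (l+1)
    have e5 : ∑ m ∈ Finset.range (l+2), epsQ l m * (x+(m:ℚ))^r = 0 := by
      have := fd_asc (show r < l+1 by omega) x
      rw [← this]
      apply Finset.sum_congr rfl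
      intro j _
      rw [epsQ]
      try ring
    rw [e5] at e4
    have e6 : ∑ m ∈ Finset.range (l+1), epsQ l (m+1) * x^l * (x+1+(m:ℚ))^r
        = x^l * ∑ m ∈ Finset.range (l+1), epsQ l (m+1) * (x+((m+1:ℕ):ℚ))^r := by
      rw [Finset.mul_sum]
      apply Finset.sum_congr rfl
      intro m _
      rw [show (x+((m+1:ℕ):ℚ)) = x+1+(m:ℚ) by push_cast; ring]
      ring
    rw [e6]
    rw [show (∑ m ∈ Finset.range (l+1), epsQ l (m+1) * (x+((m+1:ℕ):ℚ))^r)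
        = 0 - epsQ l 0 * (x+((0:ℕ):ℚ))^r from by linarith [e4]]
    norm_num [epsQ]
  rw [first, second]
  ring

lemma hfun_nat (l r : ℕ) (hr : r ≤ l) : ∀ k : ℕ, hfun l r (k:ℚ) = hfun l r 0 := by
  intro k
  induction k with
  | zero => norm_num
  | succ k ih =>
    rw [show ((k+1:ℕ):ℚ) = (k:ℚ)+1 by push_cast; ring, hfun_periodic l r hr, ih]

open Polynomial in
noncomputable def Hpoly (l r : ℕ) : ℚ[X] :=
  ∑ m ∈ Finset.range (l+1), (X + C (m:ℚ))^r *
    ∑ j ∈ Finset.range (m+1), C (epsQ l j) * (X + C (m:ℚ) - C (j:ℚ))^l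

open Polynomial in
lemma Hpoly_eval (l r : ℕ) (x : ℚ) : (Hpoly l r).eval x = hfun l r x := by
  rw [Hpoly, hfun, Polynomial.eval_finset_sum]
  apply Finset.sum_congr rfl
  intro m _
  rw [Polynomial.eval_mul, Polynomial.eval_pow, Polynomial.eval_finset_sum]
  simp

open Polynomial in
lemma Hpoly_const (l r : ℕ) (hr : r ≤ l) : Hpoly l r = C (hfun l r 0) := by
  have hroot : ∀ k : ℕ, (Hpoly l r - C (hfun l r 0)).IsRoot (k:ℚ) := by
    intro k
    rw [Polynomial.IsRoot, Polynomial.eval_sub, Polynomial.eval_C, Hpoly_eval, hfun_nat l r hr k]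
    ring
  have hinf : {x : ℚ | (Hpoly l r - C (hfun l r 0)).IsRoot x}.Infinite :=
    Set.infinite_of_injective_forall_mem (f := fun k : ℕ => (k:ℚ)) Nat.cast_injective hroot
  have h0 := Polynomial.eq_zero_of_infinite_isRoot _ hinf
  have := sub_eq_zero.mp h0
  exact this

/-- coefficients for the antiderivative -/
def wQ (l r k : ℕ) : ℚ := ((l.factorial : ℚ) * (r.factorial : ℚ)) / (((l-k).factorial : ℚ) * ((r+1+k).factorial : ℚ))
def uQ (l r k : ℕ) : ℚ := ((l.factorial : ℚ) * (r.factorial : ℚ)) / (((l-k).factorial : ℚ) * ((r+k).factorial : ℚ))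

open Polynomial in
noncomputable def Apoly (l r : ℕ) (j : ℚ) : ℚ[X] :=
  ∑ k ∈ Finset.range (l+1), C (wQ l r k) * (X^(r+1+k) * (C j - X)^(l-k))

open Polynomial in
noncomputable def dOne (l r : ℕ) (j : ℚ) (k : ℕ) : ℚ[X] :=
  C (uQ l r k) * (X^(r+k) * (C j - X)^(l-k))

lemma factorial_ne (n : ℕ) : ((n.factorial : ℚ)) ≠ 0 := by
  exact_mod_cast Nat.factorial_ne_zero n

open Polynomial in
lemma Apoly_derivative (l r : ℕ) (j : ℚ) :
    derivative (Apoly l r j) = X^r * (C j - X)^l := by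
  have main : ∀ k, k ≤ l → derivative (C (wQ l r k) * (X^(r+1+k) * (C j - X)^(l-k)))
      = C (uQ l r k) * (X^(r+k) * (C j - X)^(l-k))
        - C ((l:ℚ)-k) * C (wQ l r k) * (X^(r+1+k) * (C j - X)^(l-k-1)) := by
    intro k hk
    rw [derivative_C_mul, derivative_mul, derivative_X_pow, derivative_pow]
    have hd : derivative (C j - X) = -1 := by
      rw [derivative_sub, derivative_C, derivative_X]; ring
    rw [hd]
    have hcoeff : C (wQ l r k) * (C ((r+1+k : ℕ) : ℚ)) = C (uQ l r k) := by
      rw [← C_mul]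
      congr 1
      rw [wQ, uQ]
      have hfact : ((r+1+k).factorial : ℚ) = ((r+k).factorial : ℚ) * ((r+k+1 : ℕ) : ℚ) := by
        rw [show r+1+k = (r+k)+1 by omega, Nat.factorial_succ]
        push_cast; ring
      rw [hfact]
      field_simp
      push_cast
      ring
    have hexp : r+1+k-1 = r+k := by omega
    calc C (wQ l r k) * (C ((r+1+k:ℕ):ℚ) * X ^ (r+1+k-1) * (C j - X)^(l-k)
          + X^(r+1+k) * (C ((l-k : ℕ):ℚ) * (C j - X)^(l-k-1) * (-1)))
        = (C (wQ l r k) * C ((r+1+k:ℕ):ℚ)) * (X ^ (r+k) * (C j - X)^(l-k))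
          - C (((l-k : ℕ):ℚ)) * C (wQ l r k) * (X^(r+1+k) * (C j - X)^(l-k-1)) := by
          rw [hexp]; ring
      _ = C (uQ l r k) * (X^(r+k) * (C j - X)^(l-k))
          - C ((l:ℚ)-k) * C (wQ l r k) * (X^(r+1+k) * (C j - X)^(l-k-1)) := by
          rw [hcoeff]
          congr 2
          congr 1
          rw [Nat.cast_sub hk]
  have step : ∀ k, k < l → derivative (C (wQ l r k) * (X^(r+1+k) * (C j - X)^(l-k)))
      = dOne l r j k - dOne l r j (k+1) := by
    intro k hk
    rw [main k (le_of_lt hk), dOne, dOne]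
    rw [show r+(k+1) = r+1+k from by omega, show l-(k+1) = l-k-1 from by omega]
    congr 1
    have hln : ((l-k:ℕ):ℚ) = (l:ℚ)-k := Nat.cast_sub (le_of_lt hk)
    have hcoeff2 : ((l:ℚ)-k) * wQ l r k = uQ l r (k+1) := by
      rw [wQ, uQ]
      have hfact : ((l-k).factorial : ℚ) = ((l-(k+1)).factorial : ℚ) * ((l-k : ℕ) : ℚ) := by
        rw [show l-k = (l-(k+1))+1 by omega, Nat.factorial_succ]
        push_cast [Nat.cast_sub (show k+1 ≤ l by omega)]
        ring
      have hne' : ((l-k:ℕ):ℚ) ≠ 0 := by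
        exact_mod_cast (show l-k ≠ 0 by omega)
      rw [hfact, show r+(k+1) = r+1+k from by omega, ← hln]
      rw [show l-(k+1) = l-k-1 from by omega]
      field_simp
    rw [← C_mul, hcoeff2]
  have top : derivative (C (wQ l r l) * (X^(r+1+l) * (C j - X)^(l-l))) = dOne l r j l := by
    rw [main l (le_refl l), dOne]
    simp [Nat.sub_self]
  rw [Apoly, derivative_sum, Finset.sum_range_succ, top]
  rw [Finset.sum_congr rfl (fun k hk => step k (Finset.mem_range.mp hk))]
  rw [Finset.sum_range_sub' (dOne l r j) l]
  have : dOne l r j 0 = X^r * (C j - X)^l := by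
    rw [dOne]
    have : uQ l r 0 = 1 := by
      rw [uQ]
      simp
      exact ⟨Nat.factorial_ne_zero l, Nat.factorial_ne_zero r⟩
    rw [this]
    simp
  rw [← this]
  ring

open Polynomial in
lemma Apoly_eval_self (l r : ℕ) (j : ℕ) :
    (Apoly l r (j:ℚ)).eval (j:ℚ) = wQ l r l * (j:ℚ)^(r+1+l) := by
  rw [Apoly, eval_finset_sum]
  rw [Finset.sum_eq_single_of_mem l (Finset.self_mem_range_succ l)]
  · rw [Nat.sub_self]
    simp [eval_mul, eval_pow]
  · intro k hk hne
    have hkl : k < l := by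
      have := Finset.mem_range.mp hk
      omega
    simp only [eval_mul, eval_C, eval_pow, eval_X, eval_sub]
    rw [sub_self, zero_pow (show l-k ≠ 0 by omega)]
    ring

open Polynomial in
lemma Apoly_eval_zero (l r : ℕ) (j : ℚ) : (Apoly l r j).eval 0 = 0 := by
  rw [Apoly, eval_finset_sum]
  apply Finset.sum_eq_zero
  intro k _
  simp only [eval_mul, eval_C, eval_pow, eval_X, eval_sub]
  rw [zero_pow (show r+1+k ≠ 0 by omega)]
  ring

def phiQ (l j : ℕ) : ℚ := (-1)^(l+1+j) * ((l+1).choose j : ℚ)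

open Polynomial in
noncomputable def PhiP (l r m : ℕ) : ℚ[X] :=
  ∑ j ∈ Finset.Icc (m+1) (l+1), C (phiQ l j) * (Apoly l r (j:ℚ)).comp (X + C (m:ℚ))

lemma phi_eps (l : ℕ) (j : ℕ) (y : ℚ) :
    phiQ l j * ((j:ℚ) - y)^l = -(epsQ l j * (y - j)^l) := by
  have e : ((j:ℚ) - y)^l = (-1)^l * (y - j)^l := by
    rw [show ((j:ℚ) - y) = -(y-(j:ℚ)) by ring, neg_pow]
  rw [phiQ, epsQ, e]
  have e2 : (-1:ℚ)^l * (-1:ℚ)^l = 1 := by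
    rw [← pow_add, ← two_mul, pow_mul]
    norm_num
  calc (-1:ℚ)^(l+1+j) * ((l+1).choose j : ℚ) * ((-1)^l * (y - j)^l)
      = ((-1:ℚ)^l * (-1:ℚ)^l) * ((-1)^1 * (-1)^j * ((l+1).choose j : ℚ) * (y - j)^l) := by
        rw [pow_add, pow_add]; ring
    _ = -((-1:ℚ)^j * ((l+1).choose j : ℚ) * (y - j)^l) := by rw [e2]; ring

lemma icc_range_split (l m : ℕ) (hm : m ≤ l) (f : ℕ → ℚ) :
    ∑ j ∈ Finset.range (m+1), f j + ∑ j ∈ Finset.Icc (m+1) (l+1), f j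
      = ∑ j ∈ Finset.range (l+2), f j := by
  rw [Finset.range_eq_Ico, Finset.range_eq_Ico, ← Finset.Ico_add_one_right_eq_Icc]
  exact Finset.sum_Ico_consecutive f (by omega) (by omega)

open Polynomial in
lemma PhiP_derivative (l r m : ℕ) (hm : m ≤ l) :
    derivative (PhiP l r m) = (X + C (m:ℚ))^r *
      ∑ j ∈ Finset.range (m+1), C (epsQ l j) * (X + C (m:ℚ) - C (j:ℚ))^l := by
  rw [PhiP, derivative_sum]
  have per : ∀ j:ℕ, derivative (C (phiQ l j) * (Apoly l r (j:ℚ)).comp (X + C (m:ℚ)))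
      = C (phiQ l j) * ((X + C (m:ℚ))^r * (C (j:ℚ) - (X + C (m:ℚ)))^l) := by
    intro j
    rw [derivative_C_mul, derivative_comp, Apoly_derivative]
    rw [mul_comp, pow_comp, pow_comp, X_comp, sub_comp, C_comp, X_comp]
    rw [derivative_add, derivative_X, derivative_C]
    ring
  rw [Finset.sum_congr rfl (fun j _ => per j)]
  apply Polynomial.funext
  intro x
  simp only [eval_finset_sum, eval_mul, eval_pow, eval_add, eval_sub, eval_C, eval_X]
  have key : ∑ j ∈ Finset.Icc (m+1) (l+1), phiQ l j * ((j:ℚ) - (x + m))^l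
      = ∑ j ∈ Finset.range (m+1), epsQ l j * ((x + m) - j)^l := by
    have hfull : ∑ j ∈ Finset.range (l+2), epsQ l j * ((x + (m:ℚ)) - j)^l = 0 := by
      have := fd_desc (show l < l+1 by omega) (x + (m:ℚ))
      rw [← this]
      apply Finset.sum_congr rfl
      intro j _
      rw [epsQ]
      try ring
    have hsplit := icc_range_split l m hm (fun j => epsQ l j * ((x + (m:ℚ)) - j)^l)
    rw [hfull] at hsplit
    have : ∑ j ∈ Finset.Icc (m+1) (l+1), phiQ l j * ((j:ℚ) - (x + m))^l
        = - ∑ j ∈ Finset.Icc (m+1) (l+1), epsQ l j * ((x + (m:ℚ)) - j)^l := by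
      rw [← Finset.sum_neg_distrib]
      apply Finset.sum_congr rfl
      intro j _
      exact phi_eps l j (x + m)
    rw [this]
    linarith [hsplit]
  calc ∑ j ∈ Finset.Icc (m+1) (l+1), phiQ l j * ((x + (m:ℚ))^r * ((j:ℚ) - (x + m))^l)
      = (x + (m:ℚ))^r * ∑ j ∈ Finset.Icc (m+1) (l+1), phiQ l j * ((j:ℚ) - (x + m))^l := by
        rw [Finset.mul_sum]
        apply Finset.sum_congr rfl
        intro j _
        ring
    _ = (x + (m:ℚ))^r * ∑ j ∈ Finset.range (m+1), epsQ l j * ((x + m) - j)^l := by rw [key]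
    _ = (x + (m:ℚ))^r * ∑ j ∈ Finset.range (m+1), epsQ l j * ((x + m) - j)^l := rfl

lemma tri_swap (N : ℕ) (f : ℕ → ℕ → ℚ) :
    ∑ m ∈ Finset.range N, ∑ j ∈ Finset.Icc (m+1) N, f m j
      = ∑ j ∈ Finset.range (N+1), ∑ m ∈ Finset.range j, f m j := by
  have h1 : ∀ m, m ∈ Finset.range (N+1) → ∑ j ∈ Finset.Icc (m+1) N, f m j
      = ∑ j ∈ Finset.range (N+1), if m < j then f m j else 0 := by
    intro m _
    rw [← Finset.sum_filter]
    congr 1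
    ext j
    simp only [Finset.mem_filter, Finset.mem_Icc, Finset.mem_range]
    omega
  calc ∑ m ∈ Finset.range N, ∑ j ∈ Finset.Icc (m+1) N, f m j
      = ∑ m ∈ Finset.range (N+1), ∑ j ∈ Finset.Icc (m+1) N, f m j := by
        rw [Finset.sum_range_succ]
        rw [Finset.Icc_eq_empty (show ¬ (N+1 ≤ N) by omega)]
        simp
    _ = ∑ m ∈ Finset.range (N+1), ∑ j ∈ Finset.range (N+1), if m < j then f m j else 0 :=
        Finset.sum_congr rfl h1
    _ = ∑ j ∈ Finset.range (N+1), ∑ m ∈ Finset.range (N+1), if m < j then f m j else 0 :=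
        Finset.sum_comm
    _ = ∑ j ∈ Finset.range (N+1), ∑ m ∈ Finset.range j, f m j := by
        apply Finset.sum_congr rfl
        intro j hj
        have hjN := Finset.mem_range.mp hj
        rw [← Finset.sum_filter]
        congr 1
        ext m
        simp only [Finset.mem_filter, Finset.mem_range]
        omega

open Polynomial in
lemma keyN (l r : ℕ) (hr : r ≤ l) :
    ∑ m ∈ Finset.range (l+1), (aCoef l m : ℚ) * (m:ℚ)^r
      = wQ l r l * ∑ j ∈ Finset.range (l+2), phiQ l j * (j:ℚ)^(r+1+l) := by
  set c : ℚ := hfun l r 0 with hc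
  set Psi : ℚ[X] := ∑ m ∈ Finset.range (l+1), PhiP l r m with hPsi
  have hder : derivative Psi = C c := by
    rw [hPsi, derivative_sum]
    rw [Finset.sum_congr rfl (fun m hm => PhiP_derivative l r m (by
      have := Finset.mem_range.mp hm; omega))]
    have hH : (∑ m ∈ Finset.range (l+1), (X + C (m:ℚ))^r *
        ∑ j ∈ Finset.range (m+1), C (epsQ l j) * (X + C (m:ℚ) - C (j:ℚ))^l) = Hpoly l r := rfl
    rw [hH, Hpoly_const l r hr]
  have hQ : Psi - C c * X = C ((Psi - C c * X).coeff 0) := by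
    apply eq_C_of_natDegree_eq_zero
    apply natDegree_eq_zero_of_derivative_eq_zero
    rw [derivative_sub, hder, derivative_mul, derivative_C, derivative_X]
    ring
  have heval : Psi.eval 1 - Psi.eval 0 = c := by
    have h1 := congrArg (eval 1) hQ
    have h0 := congrArg (eval 0) hQ
    simp only [eval_sub, eval_mul, eval_C, eval_X, eval_one] at h1 h0
    rw [mul_one] at h1
    rw [mul_zero] at h0
    linarith [h1, h0]
  have hPsiEval : ∀ x : ℚ, Psi.eval x
      = ∑ m ∈ Finset.range (l+1), ∑ j ∈ Finset.Icc (m+1) (l+1),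
          phiQ l j * (Apoly l r (j:ℚ)).eval (x + m) := by
    intro x
    rw [hPsi, eval_finset_sum]
    apply Finset.sum_congr rfl
    intro m _
    rw [PhiP, eval_finset_sum]
    apply Finset.sum_congr rfl
    intro j _
    rw [eval_mul, eval_C, eval_comp, eval_add, eval_X, eval_C]
  have hswap : Psi.eval 1 - Psi.eval 0
      = ∑ j ∈ Finset.range (l+2), ∑ m ∈ Finset.range j,
          (phiQ l j * ((Apoly l r (j:ℚ)).eval (((m+1:ℕ)):ℚ) - (Apoly l r (j:ℚ)).eval ((m:ℕ):ℚ))) := by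
    rw [hPsiEval 1, hPsiEval 0, ← Finset.sum_sub_distrib]
    have := tri_swap (l+1) (fun m j =>
      phiQ l j * ((Apoly l r (j:ℚ)).eval (((m+1:ℕ)):ℚ) - (Apoly l r (j:ℚ)).eval ((m:ℕ):ℚ)))
    rw [← this]
    apply Finset.sum_congr rfl
    intro m _
    rw [← Finset.sum_sub_distrib]
    apply Finset.sum_congr rfl
    intro j _
    rw [show (1 + (m:ℚ)) = (((m+1:ℕ)):ℚ) by push_cast; ring]
    rw [show ((0:ℚ) + (m:ℚ)) = ((m:ℕ):ℚ) by push_cast; ring]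
    ring
  have htel : ∀ j : ℕ, ∑ m ∈ Finset.range j,
      (phiQ l j * ((Apoly l r (j:ℚ)).eval (((m+1:ℕ)):ℚ) - (Apoly l r (j:ℚ)).eval ((m:ℕ):ℚ)))
      = phiQ l j * ((Apoly l r (j:ℚ)).eval ((j:ℕ):ℚ) - (Apoly l r (j:ℚ)).eval ((0:ℕ):ℚ)) := by
    intro j
    rw [← Finset.mul_sum]
    congr 1
    exact Finset.sum_range_sub (fun m => (Apoly l r (j:ℚ)).eval ((m:ℕ):ℚ)) j
  have hfinal : Psi.eval 1 - Psi.eval 0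
      = wQ l r l * ∑ j ∈ Finset.range (l+2), phiQ l j * (j:ℚ)^(r+1+l) := by
    rw [hswap]
    rw [Finset.sum_congr rfl (fun j _ => htel j)]
    rw [Finset.mul_sum]
    apply Finset.sum_congr rfl
    intro j _
    rw [show ((0:ℕ):ℚ) = (0:ℚ) by norm_num]
    rw [Apoly_eval_zero, Apoly_eval_self]
    ring
  have hcval : c = ∑ m ∈ Finset.range (l+1), (aCoef l m : ℚ) * (m:ℚ)^r := by
    rw [hc, hfun]
    apply Finset.sum_congr rfl
    intro m _
    rw [aCoef_explicit l m, Ffun]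
    calc ((0:ℚ)+(m:ℚ))^r * ∑ j ∈ Finset.range (m+1), epsQ l j * ((0:ℚ)+(m:ℚ)-(j:ℚ))^l
        = (m:ℚ)^r * ∑ j ∈ Finset.range (m+1), epsQ l j * ((m:ℚ)-(j:ℚ))^l := by
          simp only [zero_add]
      _ = (∑ j ∈ Finset.range (m+1), (-1)^j * ((l+1).choose j : ℚ) * ((m:ℚ)-(j:ℚ))^l) * (m:ℚ)^r := by
          rw [mul_comm]
          rfl
  rw [← hcval, ← heval, hfinal]

lemma aCoef_zero_left (l : ℕ) (hl : 1 ≤ l) : aCoef l 0 = 0 := by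
  cases l with
  | zero => omega
  | succ l => simp [aCoef]

theorem stmt4 (l i : ℕ) (hl : 1 ≤ l) (hi : 2 * i ≤ l) :
    (1 / (((2 * i).factorial : ℚ) * (l.factorial : ℚ))) *
        ∑ j ∈ Finset.Icc 1 l, (aCoef l j : ℚ) * (((l : ℚ) + 1) / 2 - (j : ℚ)) ^ (2 * i) =
      (1 / ((2 * i + l + 1).factorial : ℚ)) *
        ∑ j ∈ Finset.range (l + 2),
          (-1 : ℚ) ^ j * ((l + 1).choose j : ℚ) * (((l : ℚ) + 1) / 2 - (j : ℚ)) ^ (2 * i + l + 1) := by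
  set n := 2*i with hn
  set N := 2*i + l + 1 with hN
  set cc : ℚ := ((l:ℚ)+1)/2 with hcc
  have hnl : n ≤ l := hi
  -- Step 0: extend LHS sum to include m = 0
  have hstep0 : ∑ j ∈ Finset.Icc 1 l, (aCoef l j : ℚ) * (cc - j)^n
      = ∑ j ∈ Finset.range (l+1), (aCoef l j : ℚ) * (cc - j)^n := by
    rw [Finset.range_eq_Ico,
      Finset.sum_eq_sum_Ico_succ_bot (show 0 < l+1 by omega)
        (fun j => (aCoef l j : ℚ) * (cc - j)^n)]
    rw [aCoef_zero_left l hl, Finset.Ico_add_one_right_eq_Icc]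
    simp
  -- Step 1: expand LHS
  have hLexp : ∑ j ∈ Finset.range (l+1), (aCoef l j : ℚ) * (cc - j)^n
      = ∑ k ∈ Finset.range (n+1), (((-1)^k * cc^(n-k) * (n.choose k : ℚ))
          * ∑ m ∈ Finset.range (l+1), (aCoef l m : ℚ) * (m:ℚ)^k) := by
    have expand : ∀ m:ℕ, (cc - (m:ℚ))^n
        = ∑ k ∈ Finset.range (n+1), (-1)^k * (m:ℚ)^k * cc^(n-k) * (n.choose k : ℚ) := by
      intro m
      rw [sub_eq_add_neg, add_comm, add_pow]
      apply Finset.sum_congr rfl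
      intro k _
      rw [neg_pow]
      try ring
    calc ∑ j ∈ Finset.range (l+1), (aCoef l j : ℚ) * (cc - j)^n
        = ∑ m ∈ Finset.range (l+1), ∑ k ∈ Finset.range (n+1),
            (aCoef l m : ℚ) * ((-1)^k * (m:ℚ)^k * cc^(n-k) * (n.choose k : ℚ)) := by
          apply Finset.sum_congr rfl
          intro m _
          rw [expand m, Finset.mul_sum]
      _ = ∑ k ∈ Finset.range (n+1), ∑ m ∈ Finset.range (l+1),
            (aCoef l m : ℚ) * ((-1)^k * (m:ℚ)^k * cc^(n-k) * (n.choose k : ℚ)) := Finset.sum_comm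
      _ = ∑ k ∈ Finset.range (n+1), (((-1)^k * cc^(n-k) * (n.choose k : ℚ))
            * ∑ m ∈ Finset.range (l+1), (aCoef l m : ℚ) * (m:ℚ)^k) := by
          apply Finset.sum_congr rfl
          intro k _
          rw [Finset.mul_sum]
          apply Finset.sum_congr rfl
          intro m _
          ring
  -- Step 2: expand RHS
  have hRexp : ∑ j ∈ Finset.range (l+2), (-1:ℚ)^j * ((l+1).choose j : ℚ) * (cc - j)^N
      = ∑ s ∈ Finset.range (N+1), (((-1)^s * cc^(N-s) * (N.choose s : ℚ)) * altA (l+1) s) := by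
    have expand : ∀ m:ℕ, (cc - (m:ℚ))^N
        = ∑ s ∈ Finset.range (N+1), (-1)^s * (m:ℚ)^s * cc^(N-s) * (N.choose s : ℚ) := by
      intro m
      rw [sub_eq_add_neg, add_comm, add_pow]
      apply Finset.sum_congr rfl
      intro s _
      rw [neg_pow]
      try ring
    calc ∑ j ∈ Finset.range (l+2), (-1:ℚ)^j * ((l+1).choose j : ℚ) * (cc - j)^N
        = ∑ j ∈ Finset.range (l+2), ∑ s ∈ Finset.range (N+1),
            ((-1:ℚ)^s * cc^(N-s) * (N.choose s : ℚ)) * ((-1)^j * ((l+1).choose j : ℚ) * (j:ℚ)^s) := by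
          apply Finset.sum_congr rfl
          intro j _
          rw [expand j, Finset.mul_sum]
          apply Finset.sum_congr rfl
          intro s _
          ring
      _ = ∑ s ∈ Finset.range (N+1), ∑ j ∈ Finset.range (l+2),
            ((-1:ℚ)^s * cc^(N-s) * (N.choose s : ℚ)) * ((-1)^j * ((l+1).choose j : ℚ) * (j:ℚ)^s) :=
          Finset.sum_comm
      _ = ∑ s ∈ Finset.range (N+1), (((-1)^s * cc^(N-s) * (N.choose s : ℚ)) * altA (l+1) s) := by
          apply Finset.sum_congr rfl
          intro s _
          rw [altA, ← Finset.mul_sum]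
  -- Step 3: kill low-order terms of RHS and reindex
  have hsplit : ∑ s ∈ Finset.range (N+1), (((-1:ℚ)^s * cc^(N-s) * (N.choose s : ℚ)) * altA (l+1) s)
      = ∑ k ∈ Finset.range (n+1),
          (((-1:ℚ)^(l+1+k) * cc^(N-(l+1+k)) * (N.choose (l+1+k) : ℚ)) * altA (l+1) (l+1+k)) := by
    set G : ℕ → ℚ := fun s => ((-1:ℚ)^s * cc^(N-s) * (N.choose s : ℚ)) * altA (l+1) s with hG
    have h1 : ∑ s ∈ Finset.Ico 0 (l+1), G s + ∑ s ∈ Finset.Ico (l+1) (N+1), G s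
        = ∑ s ∈ Finset.Ico 0 (N+1), G s :=
      Finset.sum_Ico_consecutive G (by omega) (by omega)
    have h2 : ∑ s ∈ Finset.Ico 0 (l+1), G s = 0 := by
      apply Finset.sum_eq_zero
      intro s hs
      have : s < l+1 := by
        have := Finset.mem_Ico.mp hs
        omega
      rw [hG]
      simp only []
      rw [altA_eq_zero (l+1) s this]
      ring
    have h3 : ∑ s ∈ Finset.Ico (l+1) (N+1), G s = ∑ k ∈ Finset.range (n+1), G (l+1+k) := by
      rw [Finset.sum_Ico_eq_sum_range]
      rw [show N+1-(l+1) = n+1 by omega]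
    rw [← Finset.range_eq_Ico] at h1 h2
    rw [← Finset.range_eq_Ico] at h1
    rw [← h1, h2, h3]
    simp [hG]
  -- Step 4: conclude, termwise
  rw [hstep0, hLexp, hRexp, hsplit]
  rw [Finset.mul_sum, Finset.mul_sum]
  apply Finset.sum_congr rfl
  intro k hk
  have hkn : k ≤ n := by
    have := Finset.mem_range.mp hk
    omega
  rw [keyN l k (le_trans hkn hnl)]
  have hphi : ∑ j ∈ Finset.range (l+2), phiQ l j * (j:ℚ)^(k+1+l)
      = (-1:ℚ)^(l+1) * altA (l+1) (l+1+k) := by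
    rw [altA, Finset.mul_sum]
    apply Finset.sum_congr rfl
    intro j _
    rw [phiQ, show k+1+l = l+1+k by omega, pow_add ((-1):ℚ) (l+1) j]
    ring
  rw [hphi]
  have hw : wQ l k l = ((l.factorial : ℚ) * (k.factorial : ℚ)) / ((l+1+k).factorial : ℚ) := by
    rw [wQ, Nat.sub_self, show k+1+l = l+1+k by omega]
    simp [Nat.factorial_zero]
  rw [hw]
  rw [Nat.cast_choose ℚ hkn, Nat.cast_choose ℚ (show l+1+k ≤ N by omega)]
  rw [show N-(l+1+k) = n-k by omega]
  rw [pow_add ((-1):ℚ) (l+1) k]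
  have f1 : ((n.factorial : ℚ)) ≠ 0 := factorial_ne n
  have f2 : ((l.factorial : ℚ)) ≠ 0 := factorial_ne l
  have f3 : ((k.factorial : ℚ)) ≠ 0 := factorial_ne k
  have f4 : (((n-k).factorial : ℚ)) ≠ 0 := factorial_ne (n-k)
  have f5 : (((l+1+k).factorial : ℚ)) ≠ 0 := factorial_ne (l+1+k)
  have f6 : ((N.factorial : ℚ)) ≠ 0 := factorial_ne N
  field_simp
end

section
/- Let k be an integer with 1 ≤ k ≤ 6, let l be an integer with 0 ≤ l ≤ 2k, and let θ ∈ (π/2, π) satisfy sin θ > 1/2. Then there exists c > 0 such that for every τ > 0 and every z ∈ ℂ with z ≠ 0, |arg z| ≤ θ and |z|·τ ≤ π/sin θ (so that e^{−zτ} ≠ 1), the following holds: if l = 0 or l is odd then |(γ_l(e^{−zτ})/l!)·τ^{l+1} − z^{−(l+1)}| ≤ c·τ^{l+1}, and if l ≥ 2 is even then |(γ_l(e^{−zτ})/l!)·τ^{l+1} − z^{−(l+1)}| ≤ c·τ^{l+2}·|z|. -/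
open Complex Real Filter Set Metric Asymptotics Topology

/-- `γ_l(ξ) = (Σ_{j=0}^{l} a_{l,j} ξ^{l+1−j})/(1−ξ)^{l+1}`, which equals `Σ_{n=1}^∞ n^l ξ^n`
for `|ξ| < 1`. -/
noncomputable def gammaPoly (l : ℕ) (ξ : ℂ) : ℂ :=
  (∑ j ∈ Finset.range (l + 1), (aCoef l j : ℂ) * ξ ^ (l + 1 - j)) / (1 - ξ) ^ (l + 1)

lemma aCoef_zero_zero : aCoef 0 0 = 1 := rfl

lemma aCoef_eq_zero : ∀ l j : ℕ, l + 1 ≤ j → aCoef l j = 0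
  | 0, j, h => by
      have : j ≠ 0 := by omega
      simp [aCoef, this]
  | l + 1, j, h => by
      have hj0 : j ≠ 0 := by omega
      have h1 : aCoef l j = 0 := aCoef_eq_zero l j (by omega)
      have h2 : aCoef l (j - 1) = 0 := aCoef_eq_zero l (j - 1) (by omega)
      simp [aCoef, hj0, h1, h2]

lemma aCoef_succ_succ (l j : ℕ) :
    aCoef (l + 1) (j + 1) = (j + 1) * aCoef l (j + 1) + (l + 1 - j) * aCoef l j := by
  show (if j + 1 = 0 then 0 else
    (j + 1) * aCoef l (j + 1) + (l + 2 - (j + 1)) * aCoef l (j + 1 - 1)) = _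
  simp only [Nat.succ_ne_zero, if_false, Nat.add_sub_cancel]
  congr 2
  omega

lemma key (l : ℕ) (ξ : ℂ) :
    (∑ j ∈ Finset.range (l + 2), (aCoef (l + 1) j : ℂ) * ξ ^ (l + 2 - j))
      = ξ * ((1 - ξ) * (∑ j ∈ Finset.range (l + 1),
            (aCoef l j : ℂ) * ((l + 1 - j : ℕ) : ℂ) * ξ ^ (l - j))
          + ((l : ℂ) + 1) * ∑ j ∈ Finset.range (l + 1), (aCoef l j : ℂ) * ξ ^ (l + 1 - j)) := by
  have L : (∑ j ∈ Finset.range (l + 2), (aCoef (l + 1) j : ℂ) * ξ ^ (l + 2 - j))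
      = ∑ j ∈ Finset.range (l + 1),
          ((((j : ℂ) + 1) * (aCoef l (j + 1) : ℂ) + ((l + 1 - j : ℕ) : ℂ) * (aCoef l j : ℂ))
            * ξ ^ (l + 1 - j)) := by
    rw [Finset.sum_range_succ']
    have h0 : (aCoef (l + 1) 0 : ℂ) = 0 := by simp [aCoef]
    rw [h0, zero_mul, add_zero]
    refine Finset.sum_congr rfl fun j hj => ?_
    rw [aCoef_succ_succ]
    have he : l + 2 - (j + 1) = l + 1 - j := by omega
    rw [he]
    push_cast
    ring
  rw [L]
  -- now handle RHS
  have R2 : ∑ j ∈ Finset.range (l + 1), ((j : ℂ) * (aCoef l j : ℂ) * ξ ^ (l + 2 - j))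
      = ∑ j ∈ Finset.range (l + 1), (((j : ℂ) + 1) * (aCoef l (j + 1) : ℂ) * ξ ^ (l + 1 - j)) := by
    rw [Finset.sum_range_succ' (fun j => (j : ℂ) * (aCoef l j : ℂ) * ξ ^ (l + 2 - j)) l]
    rw [Finset.sum_range_succ (fun j => ((j : ℂ) + 1) * (aCoef l (j + 1) : ℂ) * ξ ^ (l + 1 - j)) l]
    have hz : (aCoef l (l + 1) : ℂ) = 0 := by
      rw [aCoef_eq_zero l (l + 1) le_rfl]; simp
    rw [hz]
    simp only [Nat.cast_zero, zero_mul, add_zero, mul_zero, zero_mul]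
    refine Finset.sum_congr rfl fun j hj => ?_
    have he : l + 2 - (j + 1) = l + 1 - j := by omega
    rw [he]
    push_cast
    ring
  have expand : ξ * ((1 - ξ) * (∑ j ∈ Finset.range (l + 1),
            (aCoef l j : ℂ) * ((l + 1 - j : ℕ) : ℂ) * ξ ^ (l - j))
          + ((l : ℂ) + 1) * ∑ j ∈ Finset.range (l + 1), (aCoef l j : ℂ) * ξ ^ (l + 1 - j))
      = ∑ j ∈ Finset.range (l + 1), (((l + 1 - j : ℕ) : ℂ) * (aCoef l j : ℂ) * ξ ^ (l + 1 - j)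
          + (j : ℂ) * (aCoef l j : ℂ) * ξ ^ (l + 2 - j)) := by
    rw [Finset.mul_sum, Finset.mul_sum, ← Finset.sum_add_distrib, Finset.mul_sum]
    refine Finset.sum_congr rfl fun j hj => ?_
    have hjl : j ≤ l := by exact Nat.lt_succ_iff.mp (Finset.mem_range.mp hj)
    have e1 : l + 1 - j = (l - j) + 1 := by omega
    have e2 : l + 2 - j = (l - j) + 2 := by omega
    rw [e1, e2]
    have e4 : ((l - j + 1 : ℕ) : ℂ) = (l : ℂ) + 1 - (j : ℂ) := by
      push_cast [Nat.cast_sub hjl]; ring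
    rw [e4]
    ring
  rw [expand, Finset.sum_add_distrib, R2, ← Finset.sum_add_distrib]
  refine Finset.sum_congr rfl fun j hj => ?_
  ring

lemma exp_neg_ne_one {w : ℂ} (hw : Complex.exp w ≠ 1) : Complex.exp (-w) ≠ 1 := by
  rw [Complex.exp_neg]
  intro h
  apply hw
  rw [inv_eq_one] at h
  exact h

lemma hasDerivAt_gammaExp (l : ℕ) (w : ℂ) (hw : Complex.exp w ≠ 1) :
    HasDerivAt (fun t => gammaPoly l (Complex.exp (-t)))
      (-(gammaPoly (l + 1) (Complex.exp (-w)))) w := by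
  set ξ := Complex.exp (-w) with hξdef
  have hξ1 : (1 : ℂ) - ξ ≠ 0 := by
    rw [sub_ne_zero]
    exact fun h => (exp_neg_ne_one hw) h.symm
  have hexp : HasDerivAt (fun t : ℂ => Complex.exp (-t)) (-ξ) w := by
    have h1 : HasDerivAt (fun t : ℂ => -t) (-1 : ℂ) w := (hasDerivAt_id w).neg
    have h2 := (Complex.hasDerivAt_exp (-w)).comp w h1
    simpa [hξdef, Function.comp_def] using h2
  -- numerator
  have hP : HasDerivAt (fun x : ℂ => ∑ j ∈ Finset.range (l + 1), (aCoef l j : ℂ) * x ^ (l + 1 - j))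
      (∑ j ∈ Finset.range (l + 1), (aCoef l j : ℂ) * ((l + 1 - j : ℕ) : ℂ) * ξ ^ (l - j)) ξ := by
    apply HasDerivAt.fun_sum
    intro j hj
    have hjl : j ≤ l := Nat.lt_succ_iff.mp (Finset.mem_range.mp hj)
    have := (hasDerivAt_pow (l + 1 - j) ξ).const_mul (aCoef l j : ℂ)
    have he : l + 1 - j - 1 = l - j := by omega
    rw [he] at this
    refine this.congr_deriv ?_
    push_cast
    ring
  have hnum : HasDerivAt (fun t : ℂ => ∑ j ∈ Finset.range (l + 1),
      (aCoef l j : ℂ) * (Complex.exp (-t)) ^ (l + 1 - j))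
      ((∑ j ∈ Finset.range (l + 1), (aCoef l j : ℂ) * ((l + 1 - j : ℕ) : ℂ) * ξ ^ (l - j)) * (-ξ))
      w := by have := hP.comp w hexp; exact this
  have hden0 : HasDerivAt (fun t : ℂ => 1 - Complex.exp (-t)) ξ w := by
    simpa using (hexp.const_sub 1)
  have hden : HasDerivAt (fun t : ℂ => (1 - Complex.exp (-t)) ^ (l + 1))
      (((l : ℂ) + 1) * (1 - ξ) ^ l * ξ) w := by
    have := hden0.fun_pow (l + 1)
    simpa [hξdef] using this
  have hdiv := hnum.div hden (pow_ne_zero _ hξ1)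
  have hgoal : (fun t => gammaPoly l (Complex.exp (-t)))
      = fun t => (∑ j ∈ Finset.range (l + 1), (aCoef l j : ℂ) * (Complex.exp (-t)) ^ (l + 1 - j))
          / (1 - Complex.exp (-t)) ^ (l + 1) := rfl
  rw [hgoal]
  refine hdiv.congr_deriv ?_
  simp only [← hξdef]
  rw [gammaPoly]
  have hl2 : l + 1 + 1 = l + 2 := rfl
  rw [hl2, key l ξ]
  set D := ∑ j ∈ Finset.range (l + 1), (aCoef l j : ℂ) * ((l + 1 - j : ℕ) : ℂ) * ξ ^ (l - j)
  set Pl := ∑ j ∈ Finset.range (l + 1), (aCoef l j : ℂ) * ξ ^ (l + 1 - j)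
  field_simp
  ring

lemma gammaPoly_zero (w : ℂ) : gammaPoly 0 (Complex.exp (-w)) = (Complex.exp w - 1)⁻¹ := by
  have h0 : gammaPoly 0 (Complex.exp (-w))
      = Complex.exp (-w) / (1 - Complex.exp (-w)) := by
    simp [gammaPoly, aCoef_zero_zero]
  rw [h0, Complex.exp_neg]
  set u := Complex.exp w with hu
  have hu0 : u ≠ 0 := Complex.exp_ne_zero w
  rcases eq_or_ne u 1 with h1 | h1
  · simp [h1]
  · have h2 : 1 - u⁻¹ ≠ 0 := by
      rw [sub_ne_zero]
      intro h; apply h1; field_simp at h; exact h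
    have h3 : u - 1 ≠ 0 := sub_ne_zero.mpr h1
    field_simp

lemma exp_ne_one_of_small {w : ℂ} (h0 : w ≠ 0) (h : ‖w‖ < 2 * π) : Complex.exp w ≠ 1 := by
  intro he
  obtain ⟨n, hn⟩ := Complex.exp_eq_one_iff.mp he
  have hn0 : n ≠ 0 := by
    rintro rfl
    rw [hn] at h0
    simp at h0
  have h1 : (1 : ℝ) ≤ |(n : ℝ)| := by
    rw [← Int.cast_abs]
    exact_mod_cast Int.one_le_abs hn0
  have h2 : ‖w‖ = |(n : ℝ)| * (2 * π) := by
    rw [hn, norm_mul]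
    have e1 : ‖(2 * ↑π * Complex.I : ℂ)‖ = 2 * π := by
      simp [norm_mul, Real.pi_nonneg]
    have e2 : ‖((n : ℂ))‖ = |(n : ℝ)| := by
      rw [← Int.cast_abs]
      simp
    rw [e1, e2]
  nlinarith [Real.pi_pos]

noncomputable def h0fun : ℂ → ℂ := fun w => (Complex.exp w - 1)⁻¹ - w⁻¹

lemma h0fun_zero : h0fun 0 = 0 := by simp [h0fun]

lemma h0fun_littleO :
    (fun z : ℂ => h0fun z - h0fun 0) =o[𝓝[≠] (0:ℂ)] fun z => (z - 0)⁻¹ := by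
  simp only [h0fun_zero, sub_zero]
  have hslope : Tendsto (fun z : ℂ => (Complex.exp z - 1) / z) (𝓝[≠] (0:ℂ)) (𝓝 1) := by
    have h := Complex.hasDerivAt_exp 0
    rw [hasDerivAt_iff_tendsto_slope] at h
    rw [show (1:ℂ) = Complex.exp 0 by simp]
    apply Filter.Tendsto.congr' _ h
    filter_upwards [self_mem_nhdsWithin] with z hz
    rw [slope_def_field, Complex.exp_zero, sub_zero]
  have hmul : Tendsto (fun z : ℂ => z * h0fun z) (𝓝[≠] (0:ℂ)) (𝓝 0) := by
    have h1 : Tendsto (fun z : ℂ => ((Complex.exp z - 1) / z)⁻¹ - 1) (𝓝[≠] (0:ℂ)) (𝓝 0) := by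
      have := (hslope.inv₀ one_ne_zero).sub (tendsto_const_nhds (α := ℂ) (x := (1:ℂ)))
      simpa using this
    apply h1.congr'
    filter_upwards [self_mem_nhdsWithin] with z hz
    have hz0 : z ≠ 0 := hz
    rw [inv_div, h0fun, mul_sub, mul_inv_cancel₀ hz0, div_eq_mul_inv]
  rw [Asymptotics.isLittleO_iff_tendsto']
  · apply hmul.congr'
    filter_upwards [self_mem_nhdsWithin] with z hz
    have hz0 : z ≠ 0 := hz
    rw [div_eq_mul_inv, inv_inv]
    ring
  · filter_upwards [self_mem_nhdsWithin] with z hz h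
    exfalso
    rw [inv_eq_zero] at h
    exact hz h

noncomputable def htil : ℂ → ℂ :=
  Function.update h0fun 0 (limUnder (𝓝[≠] (0:ℂ)) h0fun)

lemma h0fun_diffOn : DifferentiableOn ℂ h0fun (ball (0:ℂ) (2*π) \ {0}) := by
  intro w hw
  obtain ⟨hwb, hw0⟩ := hw
  have hw0' : w ≠ 0 := hw0
  have hwe : Complex.exp w ≠ 1 :=
    exp_ne_one_of_small hw0' (by simpa [Complex.dist_eq] using mem_ball_iff_norm.mp hwb)
  have h1 : DifferentiableAt ℂ h0fun w := by
    apply DifferentiableAt.sub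
    · exact (Complex.differentiable_exp.differentiableAt.sub_const 1).inv
        (sub_ne_zero.mpr hwe)
    · exact differentiableAt_inv hw0'
  exact h1.differentiableWithinAt

lemma htil_diffOn : DifferentiableOn ℂ htil (ball (0:ℂ) (2*π)) := by
  apply Complex.differentiableOn_update_limUnder_of_isLittleO
    (isOpen_ball.mem_nhds (by simp [Real.pi_pos]))
    h0fun_diffOn h0fun_littleO

lemma htil_eq (w : ℂ) (hw : w ≠ 0) : htil w = h0fun w :=
  Function.update_of_ne hw _ _

lemma htil_analytic : AnalyticOnNhd ℂ htil (ball (0:ℂ) (2*π)) :=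
  htil_diffOn.analyticOnNhd isOpen_ball

lemma isOpen_V : IsOpen (ball (0:ℂ) (2*π) \ {0}) :=
  isOpen_ball.sdiff isClosed_singleton

lemma mem_V_prop {w : ℂ} (hw : w ∈ ball (0:ℂ) (2*π) \ {0}) :
    w ≠ 0 ∧ Complex.exp w ≠ 1 := by
  obtain ⟨hwb, hw0⟩ := hw
  have hw0' : w ≠ 0 := hw0
  exact ⟨hw0', exp_ne_one_of_small hw0'
    (by simpa [Complex.dist_eq] using mem_ball_iff_norm.mp hwb)⟩

lemma iteratedDeriv_htil (l : ℕ) :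
    ∀ w ∈ ball (0:ℂ) (2*π) \ {0},
      iteratedDeriv l htil w
        = (-1 : ℂ) ^ l * gammaPoly l (Complex.exp (-w))
          - (-1 : ℂ) ^ l * (l.factorial : ℂ) * w ^ (-(l + 1 : ℤ)) := by
  induction l with
  | zero =>
      intro w hw
      obtain ⟨hw0, hwe⟩ := mem_V_prop hw
      rw [iteratedDeriv_zero, htil_eq w hw0, h0fun, gammaPoly_zero]
      simp [zpow_neg]
  | succ l ih =>
      intro w hw
      obtain ⟨hw0, hwe⟩ := mem_V_prop hw
      rw [iteratedDeriv_succ]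
      have hev : iteratedDeriv l htil =ᶠ[𝓝 w]
          (fun t => (-1 : ℂ) ^ l * gammaPoly l (Complex.exp (-t))
            - (-1 : ℂ) ^ l * (l.factorial : ℂ) * t ^ (-(l + 1 : ℤ))) := by
        filter_upwards [isOpen_V.mem_nhds hw] with t ht
        exact ih t ht
      rw [hev.deriv_eq]
      have hd1 : HasDerivAt (fun t => (-1 : ℂ) ^ l * gammaPoly l (Complex.exp (-t)))
          ((-1 : ℂ) ^ l * -(gammaPoly (l + 1) (Complex.exp (-w)))) w :=
        (hasDerivAt_gammaExp l w hwe).const_mul _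
      have hd2 : HasDerivAt (fun t : ℂ => (-1 : ℂ) ^ l * (l.factorial : ℂ) * t ^ (-(l + 1 : ℤ)))
          ((-1 : ℂ) ^ l * (l.factorial : ℂ) * (((-(l + 1 : ℤ) : ℤ) : ℂ) * w ^ (-(l + 1 : ℤ) - 1))) w :=
        (hasDerivAt_zpow (-(l + 1 : ℤ)) w (Or.inl hw0)).const_mul _
      rw [(hd1.fun_sub hd2).deriv]
      have he : (-(l + 1 : ℤ) - 1) = -((l + 1 : ℕ) + 1 : ℤ) := by push_cast; ring
      rw [he]
      rw [Nat.factorial_succ]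
      push_cast
      ring

lemma htil_add_neg : ∀ w ∈ ball (0:ℂ) (2*π), htil w + htil (-w) = -1 := by
  have hball : ball (0:ℂ) (2*π) ∈ 𝓝 (0:ℂ) := isOpen_ball.mem_nhds (by simp [Real.pi_pos])
  have hV : ∀ w ∈ ball (0:ℂ) (2*π) \ {0}, htil w + htil (-w) = -1 := by
    intro w hw
    obtain ⟨hw0, hwe⟩ := mem_V_prop hw
    rw [htil_eq w hw0, htil_eq (-w) (neg_ne_zero.mpr hw0), h0fun, h0fun, Complex.exp_neg]
    set u := Complex.exp w
    have hu0 : u ≠ 0 := Complex.exp_ne_zero w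
    have hu1 : u - 1 ≠ 0 := sub_ne_zero.mpr hwe
    have hui : u⁻¹ - 1 ≠ 0 := by
      intro h
      rw [sub_eq_zero, inv_eq_one] at h
      exact hwe h
    have hu1' : (1:ℂ) - u ≠ 0 := fun h => hwe (by linear_combination -h)
    rw [inv_neg]
    have h2 : (u - 1)⁻¹ + (u⁻¹ - 1)⁻¹ = -1 := by
      field_simp
      ring
    linear_combination h2
  intro w hw
  rcases eq_or_ne w 0 with rfl | hw0
  · have hc : ContinuousAt htil 0 := htil_diffOn.continuousOn.continuousAt hball
    have hc2 : ContinuousAt (fun t : ℂ => htil (-t)) 0 := by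
      have hneg : ContinuousAt (fun t : ℂ => -t) (0:ℂ) := continuous_neg.continuousAt
      have hc' : ContinuousAt htil (-(0:ℂ)) := by simpa using hc
      have := ContinuousAt.comp (g := htil) (f := fun t : ℂ => -t) hc' hneg
      simpa [Function.comp_def] using this
    have hg : ContinuousAt (fun t : ℂ => htil t + htil (-t)) 0 := hc.add hc2
    have h1 : Tendsto (fun t : ℂ => htil t + htil (-t)) (𝓝[≠] (0:ℂ))
        (𝓝 (htil 0 + htil (-0))) :=
      (hg.tendsto).mono_left nhdsWithin_le_nhds
    have h2 : Tendsto (fun t : ℂ => htil t + htil (-t)) (𝓝[≠] (0:ℂ)) (𝓝 (-1)) := by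
      apply Tendsto.congr' _ (tendsto_const_nhds (x := (-1:ℂ)))
      filter_upwards [mem_nhdsWithin_of_mem_nhds hball, self_mem_nhdsWithin] with t ht ht0
      exact (hV t ⟨ht, ht0⟩).symm
    have := tendsto_nhds_unique h1 h2
    simpa using this
  · exact hV w ⟨hw, hw0⟩

lemma iteratedDeriv_const_fun : ∀ (n : ℕ) (c : ℂ), iteratedDeriv (n + 1) (fun _ : ℂ => c) = fun _ => 0 := by
  intro n
  induction n with
  | zero => intro c; funext x; rw [iteratedDeriv_one]; simp
  | succ m ih =>
      intro c
      funext x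
      rw [iteratedDeriv_succ']
      have : deriv (fun _ : ℂ => c) = fun _ : ℂ => (0:ℂ) := by
        funext y; simp
      rw [this, ih 0]

lemma iteratedDeriv_const_sub' (n : ℕ) (hn : n ≠ 0) (c : ℂ) (f : ℂ → ℂ) (x : ℂ) :
    iteratedDeriv n (fun w => c - f w) x = -iteratedDeriv n f x := by
  obtain ⟨m, rfl⟩ := Nat.exists_eq_succ_of_ne_zero hn
  rw [iteratedDeriv_succ', iteratedDeriv_succ']
  have h1 : deriv (fun w => c - f w) = fun w => -(deriv f w) := by
    funext y
    exact deriv_const_sub c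
  rw [h1]
  exact iteratedDeriv_neg m (deriv f) x

lemma htil_even_deriv_zero (l : ℕ) (hl : l ≠ 0) (hleven : Even l) :
    iteratedDeriv l htil 0 = 0 := by
  have hball : ball (0:ℂ) (2*π) ∈ 𝓝 (0:ℂ) := isOpen_ball.mem_nhds (by simp [Real.pi_pos])
  have h1 : iteratedDeriv l (fun w => htil (-w)) 0
      = iteratedDeriv l (fun w => -1 - htil w) 0 := by
    apply Filter.EventuallyEq.iteratedDeriv_eq
    filter_upwards [hball] with w hw
    have := htil_add_neg w hw
    linear_combination this
  have h2 : iteratedDeriv l (fun w => htil (-w)) 0 = iteratedDeriv l htil 0 := by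
    rw [iteratedDeriv_comp_neg]
    rw [hleven.neg_one_pow]
    simp
  have h3 : iteratedDeriv l (fun w : ℂ => -1 - htil w) 0 = -iteratedDeriv l htil 0 :=
    iteratedDeriv_const_sub' l hl (-1) htil 0
  have h4 : iteratedDeriv l htil 0 = -iteratedDeriv l htil 0 :=
    h2.symm.trans (h1.trans h3)
  linear_combination h4 / 2

theorem stmt5 (k l : ℕ) (hk1 : 1 ≤ k) (hk6 : k ≤ 6) (hl : l ≤ 2 * k)
    (θ : ℝ) (hθ : θ ∈ Set.Ioo (π / 2) π) (hsin : 1 / 2 < Real.sin θ) :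
    ∃ c > (0 : ℝ), ∀ τ : ℝ, 0 < τ → ∀ z : ℂ, z ≠ 0 → |z.arg| ≤ θ →
      ‖z‖ * τ ≤ π / Real.sin θ →
        ((l = 0 ∨ Odd l) →
          ‖gammaPoly l (Complex.exp (-z * τ)) / (l.factorial : ℂ) * (τ : ℂ) ^ (l + 1)
              - z ^ (-(l + 1 : ℤ))‖ ≤ c * τ ^ (l + 1)) ∧
        (2 ≤ l → Even l →
          ‖gammaPoly l (Complex.exp (-z * τ)) / (l.factorial : ℂ) * (τ : ℂ) ^ (l + 1)
              - z ^ (-(l + 1 : ℤ))‖ ≤ c * τ ^ (l + 2) * ‖z‖) := by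
  obtain ⟨hθ1, hθ2⟩ := hθ
  have hsin0 : 0 < Real.sin θ := by linarith
  set S := π / Real.sin θ with hSdef
  have hS0 : 0 < S := div_pos Real.pi_pos hsin0
  have hS2 : S < 2 * π := by
    rw [hSdef, div_lt_iff₀ hsin0]
    nlinarith [Real.pi_pos]
  have hKD : closedBall (0:ℂ) S ⊆ ball (0:ℂ) (2*π) := closedBall_subset_ball hS2
  set φ := iteratedDeriv l htil with hφdef
  have hφa : AnalyticOnNhd ℂ φ (ball (0:ℂ) (2*π)) := by
    rw [hφdef, iteratedDeriv_eq_iterate]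
    exact htil_analytic.iterated_deriv l
  have hφc : ContinuousOn φ (closedBall (0:ℂ) S) := (hφa.continuousOn).mono hKD
  obtain ⟨c₁, hc₁⟩ := (isCompact_closedBall (0:ℂ) S).exists_bound_of_continuousOn hφc
  have hballnhds : ball (0:ℂ) (2*π) ∈ 𝓝 (0:ℂ) := isOpen_ball.mem_nhds (by simp [Real.pi_pos])
  have hψc : ContinuousOn (dslope φ 0) (ball (0:ℂ) (2*π)) := by
    rw [continuousOn_dslope hballnhds]
    exact ⟨hφa.continuousOn, (hφa 0 (by simp [Real.pi_pos])).differentiableAt⟩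
  obtain ⟨c₂, hc₂⟩ := (isCompact_closedBall (0:ℂ) S).exists_bound_of_continuousOn (hψc.mono hKD)
  have h0K : (0:ℂ) ∈ closedBall (0:ℂ) S := by simp [hS0.le]
  have hc₁0 : 0 ≤ c₁ := le_trans (norm_nonneg _) (hc₁ 0 h0K)
  have hc₂0 : 0 ≤ c₂ := le_trans (norm_nonneg _) (hc₂ 0 h0K)
  set c := max c₁ c₂ + 1 with hcdef
  have hc0 : 0 < c := by positivity
  have hc₁c : c₁ ≤ c := le_trans (le_max_left _ _) (by linarith)
  have hc₂c : c₂ ≤ c := le_trans (le_max_right _ _) (by linarith)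
  refine ⟨c, hc0, ?_⟩
  intro τ hτ z hz harg habs
  have hτC : (τ : ℂ) ≠ 0 := by exact_mod_cast hτ.ne'
  set w := z * (τ : ℂ) with hwdef
  have hw0 : w ≠ 0 := mul_ne_zero hz hτC
  have hwnorm : ‖w‖ = ‖z‖ * τ := by
    rw [hwdef, norm_mul, Complex.norm_real, Real.norm_eq_abs,
      abs_of_pos hτ]
  have hwS : ‖w‖ ≤ S := by rw [hwnorm]; exact habs
  have hwK : w ∈ closedBall (0:ℂ) S := by
    rw [mem_closedBall, dist_zero_right]; exact hwS
  have hwV : w ∈ ball (0:ℂ) (2*π) \ {0} := ⟨hKD hwK, hw0⟩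
  have hfact : (l.factorial : ℂ) ≠ 0 := Nat.cast_ne_zero.mpr l.factorial_ne_zero
  have hfactR : (1:ℝ) ≤ (l.factorial : ℝ) := by exact_mod_cast l.factorial_pos
  have hzw : w ^ (-(l + 1 : ℤ)) * (τ : ℂ) ^ (l + 1) = z ^ (-(l + 1 : ℤ)) := by
    have h1 : ((τ:ℂ))^(l+1) = (τ:ℂ)^((l+1:ℕ):ℤ) := (zpow_natCast _ _).symm
    rw [hwdef, mul_zpow, mul_assoc, h1, ← zpow_add₀ hτC]
    have h2 : (-(l + 1 : ℤ) + ((l+1:ℕ):ℤ)) = 0 := by push_cast; ring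
    rw [h2, zpow_zero, mul_one]
  have hsq : ((-1:ℂ)) ^ l * (-1:ℂ) ^ l = 1 := by
    rw [← pow_add]
    exact Even.neg_one_pow ⟨l, rfl⟩
  have hγ : gammaPoly l (Complex.exp (-w))
      = (l.factorial : ℂ) * w ^ (-(l + 1 : ℤ)) + (-1:ℂ) ^ l * φ w := by
    have h := iteratedDeriv_htil l w hwV
    linear_combination (-(( -1:ℂ) ^ l)) * h
      - (gammaPoly l (Complex.exp (-w)) - (l.factorial : ℂ) * w ^ (-(l + 1 : ℤ))) * hsq
  have hne : -z * (τ:ℂ) = -w := by rw [hwdef]; ring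
  have main : gammaPoly l (Complex.exp (-z * ↑τ)) / (l.factorial : ℂ) * (τ:ℂ) ^ (l+1)
        - z ^ (-(l + 1 : ℤ))
      = (-1:ℂ) ^ l * φ w * (τ:ℂ) ^ (l+1) / (l.factorial : ℂ) := by
    rw [hne, hγ]
    field_simp
    linear_combination (l.factorial : ℂ) * hzw
  have habs2 : ‖gammaPoly l (Complex.exp (-z * ↑τ)) / (l.factorial : ℂ)
        * (τ:ℂ) ^ (l+1) - z ^ (-(l + 1 : ℤ))‖
      = ‖φ w‖ * τ ^ (l+1) / (l.factorial : ℝ) := by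
    rw [main, norm_div, norm_mul, norm_mul, norm_pow, norm_pow]
    simp [abs_of_pos hτ]
  constructor
  · intro _
    rw [habs2]
    have hb := hc₁ w hwK
    have h5 : ‖φ w‖ * τ ^ (l+1) / (l.factorial : ℝ) ≤ c₁ * τ ^ (l+1) := by
      have hτp : (0:ℝ) < τ ^ (l+1) := pow_pos hτ _
      rw [div_le_iff₀ (by linarith : (0:ℝ) < (l.factorial : ℝ))]
      have e1 : ‖φ w‖ * τ^(l+1) ≤ c₁ * τ^(l+1) := mul_le_mul_of_nonneg_right hb hτp.le
      have e2 : c₁ * τ^(l+1) * 1 ≤ c₁ * τ^(l+1) * (l.factorial:ℝ) :=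
        mul_le_mul_of_nonneg_left hfactR (mul_nonneg hc₁0 hτp.le)
      linarith
    have hfin : c₁ * τ ^ (l+1) ≤ c * τ ^ (l+1) :=
      mul_le_mul_of_nonneg_right hc₁c (by positivity)
    exact h5.trans hfin
  · intro hl2 hleven
    rw [habs2]
    have hφ0 : φ 0 = 0 := htil_even_deriv_zero l (by omega) hleven
    have hφw : φ w = w * dslope φ 0 w := by
      have h := sub_smul_dslope φ 0 w
      rw [sub_zero, hφ0, sub_zero, smul_eq_mul] at h
      exact h.symm
    have hbw : ‖φ w‖ ≤ c₂ * ‖w‖ := by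
      rw [hφw, norm_mul]
      exact mul_le_mul_of_nonneg_left (hc₂ w hwK) (norm_nonneg w) |>.trans_eq (mul_comm _ _) |>.trans_eq rfl
    have hτp : (0:ℝ) < τ ^ (l+1) := pow_pos hτ _
    have h6 : ‖φ w‖ * τ ^ (l+1) / (l.factorial : ℝ) ≤ c₂ * ‖w‖ * τ ^ (l+1) := by
      rw [div_le_iff₀ (by linarith : (0:ℝ) < (l.factorial : ℝ))]
      have e1 : ‖φ w‖ * τ^(l+1) ≤ (c₂ * ‖w‖) * τ^(l+1) := mul_le_mul_of_nonneg_right hbw hτp.le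
      have e2 : (c₂ * ‖w‖) * τ^(l+1) * 1 ≤ (c₂ * ‖w‖) * τ^(l+1) * (l.factorial:ℝ) :=
        mul_le_mul_of_nonneg_left hfactR
          (mul_nonneg (mul_nonneg hc₂0 (norm_nonneg w)) hτp.le)
      linarith
    have h7 : c₂ * ‖w‖ * τ ^ (l+1) = c₂ * τ ^ (l+2) * ‖z‖ := by
      rw [hwnorm]
      ring
    have h8 : c₂ * τ ^ (l+2) * ‖z‖ ≤ c * τ ^ (l+2) * ‖z‖ := by
      apply mul_le_mul_of_nonneg_right _ (norm_nonneg z)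
      exact mul_le_mul_of_nonneg_right hc₂c (by positivity)
    exact h6.trans (h7.le.trans h8)
end

section
/- Let H be a complex Banach space, A : H → H a linear map (not assumed continuous), α ∈ (0,1), θ ∈ (π/2, π) with sin θ > 1/2, c₀ > 0, and suppose R : Σ_θ → B(H) assigns to each z ∈ Σ_θ a bounded linear operator R(z) on H such that R(z) is a two-sided inverse of z^α·I − A and ‖R(z)‖ ≤ c₀·|z|^{−α}. Let k, m be integers with 1 ≤ m ≤ k ≤ 6. Then there exists c > 0, depending only on k, m, α, θ, c₀, such that for every τ > 0 and every z ∈ Σ_θ with |z|·τ ≤ π/sin θ and δ_{τ,k}(e^{−zτ}) ∈ Σ_θ: ‖δ_{τ,k}(e^{−zτ})^m·R(δ_{τ,k}(e^{−zτ})) − z^m·R(z)‖ ≤ c·τ^k·|z|^{k+m−α}. -/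
open Complex Real

/-- The open sector `Σ_θ = {z ∈ ℂ \ {0} : |arg z| < θ}`. -/
def sector (θ : ℝ) : Set ℂ := {z : ℂ | z ≠ 0 ∧ |z.arg| < θ}

lemma bdf_taylor (k : ℕ) (hk : 1 ≤ k) (hk6 : k ≤ 6) (lam : ℂ) (hl : ‖lam‖ ≤ 1/4) :
    ‖(∑ j ∈ Finset.Icc 1 k, (1 - Complex.exp (-lam)) ^ j / (j : ℂ)) - lam‖
      ≤ 256 * ‖lam‖ ^ (k+1) := by
  set u : ℂ := 1 - Complex.exp (-lam) with hu
  have hu2 : ‖u‖ ≤ 2 * ‖lam‖ := by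
    have := Complex.norm_exp_sub_one_le (x := -lam) (by simpa using hl.trans (by norm_num))
    calc ‖u‖ = ‖Complex.exp (-lam) - 1‖ := by rw [hu]; rw [norm_sub_rev]
    _ ≤ 2 * ‖-lam‖ := by simpa using this
    _ = 2 * ‖lam‖ := by rw [norm_neg]
  have hu1 : ‖u‖ ≤ 1/2 := by linarith
  have hult : ‖u‖ < 1 := by linarith
  have hsum : HasSum (fun n : ℕ => u ^ n / n) lam := by
    have h := Complex.hasSum_taylorSeries_neg_log (z := u) hult
    have h1u : (1 : ℂ) - u = Complex.exp (-lam) := by rw [hu]; ring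
    have him : (-lam).im ≤ π ∧ -π < (-lam).im := by
      have : |(-lam).im| ≤ ‖lam‖ := by
        simpa using Complex.abs_im_le_norm (-lam)
      have hpi : (1:ℝ)/4 < π := by linarith [Real.pi_gt_three]
      constructor <;> [skip; skip] <;> cases' abs_le.mp this with h1 h2 <;> linarith
    rw [h1u, Complex.log_exp him.2 him.1] at h
    simpa using h
  -- partial sum over range (k+1) equals sum over Icc 1 k
  have hpart : (∑ j ∈ Finset.Icc 1 k, u ^ j / (j : ℂ))
      = ∑ j ∈ Finset.range (k+1), u ^ j / (j : ℂ) := by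
    have hins : Finset.range (k+1) = insert 0 (Finset.Icc 1 k) := by
      ext x; simp [Finset.mem_range, Finset.mem_Icc]; omega
    rw [hins, Finset.sum_insert (by simp)]
    simp
  have hsummable : Summable (fun n : ℕ => u ^ n / (n:ℂ)) := hsum.summable
  have htail := Summable.sum_add_tsum_nat_add (f := fun n : ℕ => u ^ n / (n:ℂ)) (k+1) hsummable
  -- lam - partial = tsum tail
  have key : lam - (∑ j ∈ Finset.range (k+1), u ^ j / (j:ℂ))
      = ∑' i : ℕ, u ^ (i + (k+1)) / ((i + (k+1) : ℕ) : ℂ) := by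
    rw [hsum.tsum_eq] at htail
    push_cast at htail ⊢
    linear_combination -htail
  have hnorm : ‖∑' i : ℕ, u ^ (i + (k+1)) / ((i + (k+1) : ℕ) : ℂ)‖
      ≤ ‖u‖^(k+1) * (1 - ‖u‖)⁻¹ := by
    have hg : Summable (fun i : ℕ => ‖u‖^(k+1) * ‖u‖^i) :=
      (summable_geometric_of_lt_one (norm_nonneg u) hult).mul_left _
    have hle : ∀ i : ℕ, ‖u ^ (i + (k+1)) / ((i + (k+1) : ℕ) : ℂ)‖ ≤ ‖u‖^(k+1) * ‖u‖^i := by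
      intro i
      rw [norm_div, norm_pow]
      have h1 : (1:ℝ) ≤ ‖((i + (k+1) : ℕ) : ℂ)‖ := by
        rw [Complex.norm_natCast]
        exact_mod_cast Nat.one_le_iff_ne_zero.mpr (by omega)
      calc ‖u‖ ^ (i + (k+1)) / ‖((i + (k+1) : ℕ) : ℂ)‖ ≤ ‖u‖ ^ (i + (k+1)) / 1 := by
            apply div_le_div_of_nonneg_left _ one_pos h1
            positivity
        _ = ‖u‖^(k+1) * ‖u‖^i := by rw [div_one, pow_add, mul_comm]
    calc ‖∑' i : ℕ, u ^ (i + (k+1)) / ((i + (k+1) : ℕ) : ℂ)‖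
        ≤ ∑' i : ℕ, ‖u ^ (i + (k+1)) / ((i + (k+1) : ℕ) : ℂ)‖ := by
          apply norm_tsum_le_tsum_norm
          exact (hsummable.comp_injective (add_left_injective (k+1))).norm
      _ ≤ ∑' i : ℕ, ‖u‖^(k+1) * ‖u‖^i := by
          apply Summable.tsum_le_tsum hle _ hg
          exact (hsummable.comp_injective (add_left_injective (k+1))).norm
      _ = ‖u‖^(k+1) * (1 - ‖u‖)⁻¹ := by
          rw [tsum_mul_left, tsum_geometric_of_lt_one (norm_nonneg u) hult]
  have h2 : ‖u‖^(k+1) * (1 - ‖u‖)⁻¹ ≤ (2*‖lam‖)^(k+1) * 2 := by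
    apply mul_le_mul
    · exact pow_le_pow_left₀ (norm_nonneg u) hu2 _
    · rw [inv_le_comm₀ (by linarith) (by norm_num)]; linarith
    · exact inv_nonneg.mpr (by linarith)
    · positivity
  have h3 : (2*‖lam‖)^(k+1) * 2 ≤ 256 * ‖lam‖^(k+1) := by
    rw [mul_pow]
    have : (2:ℝ)^(k+1) ≤ 2^7 := pow_le_pow_right₀ (by norm_num) (by omega)
    nlinarith [pow_nonneg (norm_nonneg lam) (k+1)]
  calc ‖(∑ j ∈ Finset.Icc 1 k, u ^ j / (j : ℂ)) - lam‖
      = ‖lam - (∑ j ∈ Finset.range (k+1), u ^ j / (j:ℂ))‖ := by rw [hpart, norm_sub_rev]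
    _ ≤ ‖u‖^(k+1) * (1 - ‖u‖)⁻¹ := by rw [key]; exact hnorm
    _ ≤ 256 * ‖lam‖^(k+1) := le_trans h2 h3

lemma sector_disc_slit {θ : ℝ} (hθ : θ ∈ Set.Ioo (π / 2) π) (hsin : 1 / 2 < Real.sin θ)
    {z w : ℂ} (hz : z ∈ sector θ) (hw : ‖w - z‖ ≤ ‖z‖ / 4) : w ∈ Complex.slitPlane := by
  obtain ⟨hz0, harg⟩ := hz
  have hzpos : 0 < ‖z‖ := norm_pos_iff.mpr hz0
  rw [Complex.mem_slitPlane_iff]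
  by_contra hcon
  push_neg at hcon
  obtain ⟨hre, him⟩ := hcon
  -- w is a nonpositive real
  rcases le_or_gt 0 z.re with hzre | hzre
  · -- then ‖w - z‖ ≥ ‖z‖
    have h1 : ‖z‖ ≤ ‖w - z‖ := by
      have h2 : z.re ^ 2 + z.im ^ 2 ≤ (w.re - z.re)^2 + (w.im - z.im)^2 := by
        have e : (w.im - z.im)^2 = z.im^2 := by rw [him]; ring
        nlinarith [mul_nonneg (neg_nonneg.mpr hre) hzre]
      have e1 : ‖z‖ = Real.sqrt (z.re^2 + z.im^2) := by
        rw [Complex.norm_def, Complex.normSq_apply]; ring_nf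
      have e2 : ‖w - z‖ = Real.sqrt ((w.re - z.re)^2 + (w.im - z.im)^2) := by
        rw [Complex.norm_def, Complex.normSq_apply]
        simp [Complex.sub_re, Complex.sub_im]; ring_nf
      rw [e1, e2]; exact Real.sqrt_le_sqrt h2
    linarith
  · -- z.re < 0, so |sin (arg z)| > 1/2, so |z.im| > ‖z‖/2
    have hcos : Real.cos z.arg < 0 := by
      rw [Complex.cos_arg hz0]
      exact div_neg_of_neg_of_pos hzre (by simpa using hzpos)
    have habs : π/2 < |z.arg| := by
      by_contra hle
      push_neg at hle
      have := Real.cos_nonneg_of_mem_Icc (x := z.arg) (abs_le.mp hle |> fun h => ⟨h.1, h.2⟩)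
      linarith
    have hsin2 : Real.sin θ ≤ Real.sin |z.arg| := by
      have e1 : Real.sin θ = Real.cos (θ - π/2) := by
        rw [Real.cos_sub]; simp
      have e2 : Real.sin |z.arg| = Real.cos (|z.arg| - π/2) := by
        rw [Real.cos_sub]; simp
      rw [e1, e2]
      apply Real.cos_le_cos_of_nonneg_of_le_pi
      · linarith
      · have := hθ.2; linarith
      · linarith
    have hargpi : |z.arg| ≤ π := le_trans harg.le hθ.2.le
    have hsinarg : |Real.sin z.arg| = Real.sin |z.arg| := by
      rcases le_or_gt 0 z.arg with h | h
      · rw [_root_.abs_of_nonneg h, _root_.abs_of_nonneg]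
        apply Real.sin_nonneg_of_nonneg_of_le_pi h
        rw [_root_.abs_of_nonneg h] at hargpi; exact hargpi
      · rw [_root_.abs_of_neg h, Real.sin_neg, _root_.abs_of_nonpos]
        rw [← neg_nonneg, ← Real.sin_neg]
        apply Real.sin_nonneg_of_nonneg_of_le_pi (by linarith)
        rw [_root_.abs_of_neg h] at hargpi; linarith
    have him2 : ‖z‖ / 2 < |z.im| := by
      have e : |z.im| = ‖z‖ * |Real.sin z.arg| := by
        rw [← Complex.norm_mul_sin_arg z, abs_mul,
          _root_.abs_of_nonneg (norm_nonneg z)]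
      rw [e, hsinarg]
      have h12 : 1/2 < Real.sin |z.arg| := lt_of_lt_of_le hsin hsin2
      nlinarith
    have : |z.im| ≤ ‖w - z‖ := by
      have : |(w - z).im| ≤ ‖w - z‖ := by
        simpa using Complex.abs_im_le_norm (w - z)
      simpa [Complex.sub_im, him, abs_sub_comm] using this
    linarith

lemma cpow_diff_bound_s12 {θ : ℝ} (hθ : θ ∈ Set.Ioo (π / 2) π) (hsin : 1 / 2 < Real.sin θ)
    {α : ℝ} (hα : α ∈ Set.Ioo (0 : ℝ) 1) {z δ : ℂ} (hz : z ∈ sector θ)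
    (hd : ‖δ - z‖ ≤ ‖z‖ / 4) :
    ‖δ ^ (α : ℂ) - z ^ (α : ℂ)‖ ≤ 2 * ‖z‖ ^ (α - 1) * ‖δ - z‖ := by
  have hzpos : 0 < ‖z‖ := norm_pos_iff.mpr hz.1
  set s : Set ℂ := Metric.closedBall z (‖z‖ / 4) with hs
  have hconv : Convex ℝ s := convex_closedBall _ _
  have hmem : ∀ w ∈ s, w ∈ Complex.slitPlane := by
    intro w hwmem
    apply sector_disc_slit hθ hsin hz
    simpa [hs, dist_eq_norm] using hwmem
  have hderiv : ∀ w ∈ s, HasDerivWithinAt (fun x : ℂ => x ^ (α : ℂ))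
      ((α : ℂ) * w ^ ((α : ℂ) - 1)) s w := fun w hwmem =>
    ((Complex.hasStrictDerivAt_cpow_const (hmem w hwmem)).hasDerivAt).hasDerivWithinAt
  have hbound : ∀ w ∈ s, ‖(α : ℂ) * w ^ ((α : ℂ) - 1)‖ ≤ 2 * ‖z‖ ^ (α - 1) := by
    intro w hwmem
    have hwz : ‖w - z‖ ≤ ‖z‖ / 4 := by simpa [hs, dist_eq_norm] using hwmem
    have hwlow : ‖z‖ / 2 ≤ ‖w‖ := by
      have := norm_sub_norm_le z w
      rw [norm_sub_rev] at this
      linarith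
    have hwpos : 0 < ‖w‖ := by linarith
    have e1 : ‖(α : ℂ) * w ^ ((α : ℂ) - 1)‖ = α * ‖w‖ ^ (α - 1) := by
      rw [norm_mul]
      have : ((α : ℂ) - 1) = ((α - 1 : ℝ) : ℂ) := by push_cast; ring
      rw [this, Complex.norm_cpow_real,
        Complex.norm_real, Real.norm_eq_abs, _root_.abs_of_pos hα.1]
    rw [e1]
    have h2 : ‖w‖ ^ (α - 1) ≤ (‖z‖/2) ^ (α - 1) := by
      apply Real.rpow_le_rpow_of_nonpos (by linarith) hwlow (by linarith [hα.2])
    have h3 : (‖z‖/2) ^ (α - 1) ≤ 2 * ‖z‖ ^ (α - 1) := by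
      rw [div_eq_mul_inv, Real.mul_rpow hzpos.le (by norm_num),
        mul_comm (‖z‖ ^ (α-1))]
      apply mul_le_mul_of_nonneg_right _ (Real.rpow_nonneg hzpos.le _)
      rw [Real.inv_rpow (by norm_num : (0:ℝ) ≤ 2), ← Real.rpow_neg (by norm_num : (0:ℝ) ≤ 2)]
      calc (2:ℝ) ^ (-(α - 1)) ≤ 2 ^ (1:ℝ) :=
            Real.rpow_le_rpow_of_exponent_le one_le_two (by linarith [hα.1])
        _ = 2 := Real.rpow_one 2
    calc α * ‖w‖ ^ (α - 1) ≤ 1 * ‖w‖ ^ (α - 1) := by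
          apply mul_le_mul_of_nonneg_right hα.2.le (Real.rpow_nonneg hwpos.le _)
      _ = ‖w‖ ^ (α - 1) := one_mul _
      _ ≤ (‖z‖/2) ^ (α - 1) := h2
      _ ≤ 2 * ‖z‖ ^ (α - 1) := h3
  have hzs : z ∈ s := by simp [hs, hzpos.le]; positivity
  have hds : δ ∈ s := by simpa [hs, dist_eq_norm] using hd
  simpa using hconv.norm_image_sub_le_of_norm_hasDerivWithin_le hderiv hbound hzs hds

lemma rpow_neg_le_two_mul {r x β : ℝ} (hr : 0 < r) (hx : r/2 ≤ x)
    (hβ0 : 0 ≤ β) (hβ1 : β ≤ 1) : x ^ (-β) ≤ 2 * r ^ (-β) := by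
  have hx0 : 0 < x := lt_of_lt_of_le (by linarith) hx
  have h1 : x ^ (-β) ≤ (r/2) ^ (-β) :=
    Real.rpow_le_rpow_of_nonpos (by linarith) hx (by linarith)
  have h2 : (r/2 : ℝ) ^ (-β) = (2:ℝ)^β * r ^ (-β) := by
    rw [div_eq_mul_inv, Real.mul_rpow hr.le (by norm_num),
      Real.inv_rpow (by norm_num : (0:ℝ) ≤ 2), ← Real.rpow_neg (by norm_num : (0:ℝ) ≤ 2),
      neg_neg, mul_comm]
  have h3 : (2:ℝ)^β ≤ 2 := by
    calc (2:ℝ)^β ≤ 2^(1:ℝ) := Real.rpow_le_rpow_of_exponent_le one_le_two hβ1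
    _ = 2 := Real.rpow_one 2
  calc x ^ (-β) ≤ (r/2) ^ (-β) := h1
    _ = (2:ℝ)^β * r ^ (-β) := h2
    _ ≤ 2 * r ^ (-β) := mul_le_mul_of_nonneg_right h3 (Real.rpow_nonneg hr.le _)

set_option maxHeartbeats 1000000 in
theorem stmt12 {H : Type*} [NormedAddCommGroup H] [NormedSpace ℂ H] [CompleteSpace H]
    (A : H →ₗ[ℂ] H) (α : ℝ) (hα : α ∈ Set.Ioo (0 : ℝ) 1)
    (θ : ℝ) (hθ : θ ∈ Set.Ioo (π / 2) π) (hsin : 1 / 2 < Real.sin θ)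
    (c₀ : ℝ) (hc₀ : 0 < c₀) (R : ℂ → H →L[ℂ] H)
    (hR1 : ∀ z ∈ sector θ, ∀ x : H, R z (z ^ (α : ℂ) • x - A x) = x)
    (hR2 : ∀ z ∈ sector θ, ∀ x : H, z ^ (α : ℂ) • R z x - A (R z x) = x)
    (hRnorm : ∀ z ∈ sector θ, ‖R z‖ ≤ c₀ * ‖z‖ ^ (-α))
    (k m : ℕ) (hm1 : 1 ≤ m) (hmk : m ≤ k) (hk6 : k ≤ 6) :
    ∃ c > (0 : ℝ), ∀ τ : ℝ, 0 < τ → ∀ z ∈ sector θ,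
      ‖z‖ * τ ≤ π / Real.sin θ →
      bdfDelta τ k (Complex.exp (-z * τ)) ∈ sector θ →
        ‖(bdfDelta τ k (Complex.exp (-z * τ)) ^ m) • R (bdfDelta τ k (Complex.exp (-z * τ)))
            - (z ^ m) • R z‖ ≤
          c * τ ^ k * ‖z‖ ^ ((k : ℝ) + m - α) := by
  have hk1 : 1 ≤ k := le_trans hm1 hmk
  set K : ℝ := 6 * (1 + Real.exp (2*π))^6 with hK
  have hKpos : 0 < K := by positivity
  have hK1 : 1 ≤ K := by
    have h : (1:ℝ) ≤ (1 + Real.exp (2*π))^6 :=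
      one_le_pow₀ (by linarith [Real.exp_pos (2*π)])
    rw [hK]; linarith
  set c : ℝ := 100000*c₀ + 1024*c₀^2 + c₀ * 1024^6 * ((1024*K)^6 + 1) with hc
  have hcpos : 0 < c := by positivity
  refine ⟨c, hcpos, ?_⟩
  intro τ hτ z hz hzM hδsec
  set δ : ℂ := bdfDelta τ k (Complex.exp (-z * τ)) with hδdef
  set r : ℝ := ‖z‖ with hrdef
  have hrpos : 0 < r := by
    rw [hrdef]; exact norm_pos_iff.mpr hz.1
  have hznorm : ‖z‖ = r := rfl
  set lam : ℂ := z * (τ:ℂ) with hlam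
  have hlamnorm : ‖lam‖ = r * τ := by
    rw [hlam, norm_mul, Complex.norm_real, Real.norm_eq_abs, abs_of_pos hτ, hznorm]
  have hexp_eq : Complex.exp (-z * τ) = Complex.exp (-lam) := by rw [hlam]; ring_nf
  set g : ℂ := ∑ j ∈ Finset.Icc 1 k, (1 - Complex.exp (-lam)) ^ j / (j : ℂ) with hg
  have hδg : δ = (1/(τ:ℂ)) * g := by
    rw [hδdef, bdfDelta, hexp_eq]
  have hτC : (τ:ℂ) ≠ 0 := by exact_mod_cast hτ.ne'
  have hzlam : z = (1/(τ:ℂ)) * lam := by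
    rw [hlam]; field_simp
  -- norms of resolvents
  have hRz : ‖R z‖ ≤ c₀ * r ^ (-α) := hRnorm z hz
  have hRδ0 : ‖R δ‖ ≤ c₀ * ‖δ‖ ^ (-α) := hRnorm δ hδsec
  have hδne : δ ≠ 0 := hδsec.1
  have hδpos : 0 < ‖δ‖ := norm_pos_iff.mpr hδne
  -- the two cases
  rcases le_or_gt (‖lam‖) (1/1024) with hcase | hcase
  · -- CASE A : small lam
    have htaylor : ‖g - lam‖ ≤ 256 * ‖lam‖ ^ (k+1) :=
      bdf_taylor k hk1 hk6 lam (by linarith)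
    have hδz : δ - z = (1/(τ:ℂ)) * (g - lam) := by
      rw [hδg, hzlam]; ring
    have hDnorm : ‖δ - z‖ = ‖g - lam‖ / τ := by
      rw [hδz, norm_mul, norm_div, norm_one, Complex.norm_real, Real.norm_eq_abs,
        abs_of_pos hτ]
      ring
    have hD1 : ‖δ - z‖ ≤ 256 * τ^k * r^(k+1) := by
      rw [hDnorm]
      rw [div_le_iff₀ hτ]
      calc ‖g - lam‖ ≤ 256 * ‖lam‖ ^ (k+1) := htaylor
        _ = 256 * τ^k * r^(k+1) * τ := by
            rw [hlamnorm, mul_pow, pow_succ, pow_succ]; ring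
    have hlamk : (r*τ)^k ≤ 1/1024 := by
      calc (r*τ)^k ≤ (1/1024:ℝ)^k := by
            apply pow_le_pow_left₀ (by positivity) (by rw [← hlamnorm]; exact hcase)
        _ ≤ (1/1024:ℝ)^1 := pow_le_pow_of_le_one (by norm_num) (by norm_num) hk1
        _ = 1/1024 := pow_one _
    have hD2 : ‖δ - z‖ ≤ r / 4 := by
      calc ‖δ - z‖ ≤ 256 * τ^k * r^(k+1) := hD1
        _ = 256 * (r*τ)^k * r := by rw [mul_pow, pow_succ]; ring
        _ ≤ 256 * (1/1024) * r := by
            have := mul_le_mul_of_nonneg_right hlamk hrpos.le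
            nlinarith
        _ = r / 4 := by ring
    have hδup : ‖δ‖ ≤ 2 * r := by
      have h := norm_add_le (δ - z) z
      rw [sub_add_cancel, hznorm] at h
      linarith [hD2]
    have hδlow : r/2 ≤ ‖δ‖ := by
      have h := norm_sub_norm_le z δ
      rw [norm_sub_rev, hznorm] at h
      linarith [hD2]
    have hRδ : ‖R δ‖ ≤ 2 * c₀ * r ^ (-α) := by
      calc ‖R δ‖ ≤ c₀ * ‖δ‖ ^ (-α) := hRδ0
        _ ≤ c₀ * (2 * r ^ (-α)) :=
            mul_le_mul_of_nonneg_left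
              (rpow_neg_le_two_mul hrpos hδlow hα.1.le hα.2.le) hc₀.le
        _ = 2 * c₀ * r ^ (-α) := by ring
    -- resolvent identity
    have hid : ∀ x : H, (R δ - R z) x
        = (z ^ (α:ℂ) - δ ^ (α:ℂ)) • (R δ) ((R z) x) := by
      intro x
      set y : H := R z x with hy
      have h0 : z ^ (α:ℂ) • y - A y = x := hR2 z hz x
      have h2 : R δ (δ ^ (α:ℂ) • y - A y) = y := hR1 δ hδsec y
      have h1 : R δ (z ^ (α:ℂ) • y - A y) = R δ x := by rw [h0]
      have h3 : (z ^ (α:ℂ) • y - A y) - (δ ^ (α:ℂ) • y - A y)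
          = (z ^ (α:ℂ) - δ ^ (α:ℂ)) • y := by
        rw [sub_smul]; abel
      calc (R δ - R z) x = R δ x - y := by simp [hy]
        _ = R δ (z ^ (α:ℂ) • y - A y) - R δ (δ ^ (α:ℂ) • y - A y) := by rw [h1, h2]
        _ = R δ ((z ^ (α:ℂ) • y - A y) - (δ ^ (α:ℂ) • y - A y)) := (map_sub _ _ _).symm
        _ = R δ ((z ^ (α:ℂ) - δ ^ (α:ℂ)) • y) := by rw [h3]
        _ = (z ^ (α:ℂ) - δ ^ (α:ℂ)) • R δ y := by rw [map_smul]
    have hRdiff : ‖R δ - R z‖ ≤ ‖δ ^ (α:ℂ) - z ^ (α:ℂ)‖ * (‖R δ‖ * ‖R z‖) := by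
      apply ContinuousLinearMap.opNorm_le_bound _ (by positivity)
      intro x
      rw [hid x, norm_smul (z ^ (α:ℂ) - δ ^ (α:ℂ)) ((R δ) ((R z) x)), norm_sub_rev]
      calc ‖δ ^ (α:ℂ) - z ^ (α:ℂ)‖ * ‖(R δ) ((R z) x)‖
          ≤ ‖δ ^ (α:ℂ) - z ^ (α:ℂ)‖ * (‖R δ‖ * (‖R z‖ * ‖x‖)) := by
            apply mul_le_mul_of_nonneg_left _ (norm_nonneg _)
            calc ‖(R δ) ((R z) x)‖ ≤ ‖R δ‖ * ‖(R z) x‖ := (R δ).le_opNorm _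
              _ ≤ ‖R δ‖ * (‖R z‖ * ‖x‖) :=
                  mul_le_mul_of_nonneg_left ((R z).le_opNorm x) (norm_nonneg _)
        _ = ‖δ ^ (α:ℂ) - z ^ (α:ℂ)‖ * (‖R δ‖ * ‖R z‖) * ‖x‖ := by ring
    have hcpow : ‖δ ^ (α:ℂ) - z ^ (α:ℂ)‖ ≤ 2 * r ^ (α - 1) * ‖δ - z‖ :=
      hznorm ▸ cpow_diff_bound_s12 hθ hsin hα hz (hznorm ▸ hD2)
    -- power difference
    have hpowdiff : ‖δ^m - z^m‖ ≤ 192 * r^(m-1) * ‖δ - z‖ := by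
      have hgs := geom_sum₂_mul δ z m
      calc ‖δ^m - z^m‖ = ‖(∑ i ∈ Finset.range m, δ ^ i * z ^ (m - 1 - i)) * (δ - z)‖ := by
            rw [hgs]
        _ = ‖∑ i ∈ Finset.range m, δ ^ i * z ^ (m - 1 - i)‖ * ‖δ - z‖ := by rw [norm_mul]
        _ ≤ 192 * r^(m-1) * ‖δ - z‖ := by
            apply mul_le_mul_of_nonneg_right _ (norm_nonneg _)
            calc ‖∑ i ∈ Finset.range m, δ ^ i * z ^ (m - 1 - i)‖
                ≤ ∑ i ∈ Finset.range m, ‖δ ^ i * z ^ (m - 1 - i)‖ := norm_sum_le _ _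
              _ ≤ ∑ i ∈ Finset.range m, 32 * r^(m-1) := by
                  apply Finset.sum_le_sum
                  intro i hi
                  have him : i < m := Finset.mem_range.mp hi
                  rw [norm_mul, norm_pow, norm_pow, hznorm]
                  calc ‖δ‖^i * r^(m-1-i) ≤ (2*r)^i * r^(m-1-i) := by
                        apply mul_le_mul_of_nonneg_right
                          (pow_le_pow_left₀ (norm_nonneg _) hδup i) (by positivity)
                    _ = 2^i * (r^i * r^(m-1-i)) := by rw [mul_pow]; ring
                    _ = 2^i * r^(m-1) := by
                        rw [← pow_add]
                        congr 2
                        omega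
                    _ ≤ 32 * r^(m-1) := by
                        apply mul_le_mul_of_nonneg_right _ (by positivity)
                        calc (2:ℝ)^i ≤ 2^5 := by
                              apply pow_le_pow_right₀ one_le_two
                              omega
                          _ = 32 := by norm_num
              _ = m * (32 * r^(m-1)) := by rw [Finset.sum_const, Finset.card_range]; simp
              _ ≤ 192 * r^(m-1) := by
                  have : (m:ℝ) ≤ 6 := by exact_mod_cast le_trans hmk hk6
                  nlinarith [pow_nonneg hrpos.le (m-1)]
    -- decomposition
    have hdecomp : (δ^m) • R δ - (z^m) • R z
        = (δ^m - z^m) • R δ + (z^m) • (R δ - R z) := by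
      rw [sub_smul, smul_sub]; abel
    -- rpow collection
    have hX : r^(m-1) * (τ^k * r^(k+1)) * r^(-α) = τ^k * r^((k:ℝ)+m-α) := by
      have e1 : r^(m-1) * r^(k+1) = r^(k+m) := by
        rw [← pow_add]; congr 1; omega
      have e2 : (r:ℝ)^(k+m) * r^(-α) = r^((k:ℝ)+m-α) := by
        rw [← Real.rpow_natCast r (k+m), ← Real.rpow_add hrpos]
        congr 1; push_cast; ring
      calc r^(m-1) * (τ^k * r^(k+1)) * r^(-α) = τ^k * (r^(m-1) * r^(k+1) * r^(-α)) := by ring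
        _ = τ^k * (r^(k+m) * r^(-α)) := by rw [e1]
        _ = τ^k * r^((k:ℝ)+m-α) := by rw [e2]
    have hY : r^m * (r^(α-1) * (τ^k * r^(k+1)) * (r^(-α) * r^(-α)))
        = τ^k * r^((k:ℝ)+m-α) := by
      have e1 : (r:ℝ)^m * r^(k+1) = r^(k+m+1) := by rw [← pow_add]; congr 1; omega
      have e2 : (r:ℝ)^(k+m+1) * (r^(α-1) * (r^(-α) * r^(-α))) = r^((k:ℝ)+m-α) := by
        rw [← Real.rpow_natCast r (k+m+1), ← Real.rpow_add hrpos, ← Real.rpow_add hrpos,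
          ← Real.rpow_add hrpos]
        congr 1; push_cast; ring
      calc r^m * (r^(α-1) * (τ^k * r^(k+1)) * (r^(-α) * r^(-α)))
          = τ^k * (r^(k+m+1) * (r^(α-1) * (r^(-α) * r^(-α)))) := by rw [← e1]; ring
        _ = τ^k * r^((k:ℝ)+m-α) := by rw [e2]
    -- assemble
    have hT1 : ‖(δ^m - z^m) • R δ‖ ≤ 100000 * c₀ * (τ^k * r^((k:ℝ)+m-α)) := by
      rw [norm_smul (δ^m - z^m) (R δ)]
      calc ‖δ^m - z^m‖ * ‖R δ‖ ≤ (192 * r^(m-1) * ‖δ - z‖) * (2 * c₀ * r^(-α)) := by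
            apply mul_le_mul hpowdiff hRδ (norm_nonneg _) (by positivity)
        _ ≤ (192 * r^(m-1) * (256 * τ^k * r^(k+1))) * (2 * c₀ * r^(-α)) := by
            apply mul_le_mul_of_nonneg_right _ (by positivity)
            exact mul_le_mul_of_nonneg_left hD1 (by positivity)
        _ = 98304 * c₀ * (r^(m-1) * (τ^k * r^(k+1)) * r^(-α)) := by ring
        _ = 98304 * c₀ * (τ^k * r^((k:ℝ)+m-α)) := by rw [hX]
        _ ≤ 100000 * c₀ * (τ^k * r^((k:ℝ)+m-α)) := by
            have : (0:ℝ) ≤ τ^k * r^((k:ℝ)+m-α) := by positivity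
            nlinarith
    have hT2 : ‖(z^m) • (R δ - R z)‖ ≤ 1024 * c₀^2 * (τ^k * r^((k:ℝ)+m-α)) := by
      rw [norm_smul (z^m) (R δ - R z), norm_pow, hznorm]
      calc r^m * ‖R δ - R z‖
          ≤ r^m * ((2 * r^(α-1) * ‖δ - z‖) * ((2 * c₀ * r^(-α)) * (c₀ * r^(-α)))) := by
            apply mul_le_mul_of_nonneg_left _ (by positivity)
            calc ‖R δ - R z‖ ≤ ‖δ ^ (α:ℂ) - z ^ (α:ℂ)‖ * (‖R δ‖ * ‖R z‖) := hRdiff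
              _ ≤ (2 * r^(α-1) * ‖δ - z‖) * ((2 * c₀ * r^(-α)) * (c₀ * r^(-α))) := by
                  apply mul_le_mul hcpow _ (by positivity) (by positivity)
                  apply mul_le_mul hRδ hRz (norm_nonneg _) (by positivity)
        _ ≤ r^m * ((2 * r^(α-1) * (256 * τ^k * r^(k+1))) * ((2 * c₀ * r^(-α)) * (c₀ * r^(-α)))) := by
            apply mul_le_mul_of_nonneg_left _ (by positivity)
            apply mul_le_mul_of_nonneg_right _ (by positivity)
            apply mul_le_mul_of_nonneg_left hD1 (by positivity)
        _ = 1024 * c₀^2 * (r^m * (r^(α-1) * (τ^k * r^(k+1)) * (r^(-α) * r^(-α)))) := by ring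
        _ = 1024 * c₀^2 * (τ^k * r^((k:ℝ)+m-α)) := by rw [hY]
    calc ‖(δ^m) • R δ - (z^m) • R z‖
        ≤ ‖(δ^m - z^m) • R δ‖ + ‖(z^m) • (R δ - R z)‖ := by
          rw [hdecomp]; exact norm_add_le _ _
      _ ≤ (100000 * c₀ + 1024 * c₀^2) * (τ^k * r^((k:ℝ)+m-α)) := by
          rw [add_mul]; exact add_le_add hT1 hT2
      _ ≤ c * τ ^ k * r ^ ((k : ℝ) + m - α) := by
          rw [hc]
          have h1 : (0:ℝ) ≤ τ^k * r^((k:ℝ)+m-α) := by positivity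
          have h2 : (0:ℝ) ≤ c₀ * 1024^6 * ((1024*K)^6 + 1) := by positivity
          nlinarith
  · -- CASE B : large lam
    set B : ℝ := 1 + Real.exp (2*π) with hB
    have hB1 : 1 ≤ B := by rw [hB]; linarith [Real.exp_pos (2*π)]
    have hM2pi : π / Real.sin θ ≤ 2*π := by
      rw [div_le_iff₀ (by linarith)]
      nlinarith [Real.pi_pos]
    have hu : ‖(1:ℂ) - Complex.exp (-lam)‖ ≤ B := by
      calc ‖(1:ℂ) - Complex.exp (-lam)‖ ≤ ‖(1:ℂ)‖ + ‖Complex.exp (-lam)‖ := norm_sub_le _ _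
        _ = 1 + Real.exp ((-lam).re) := by rw [norm_one, Complex.norm_exp]
        _ ≤ 1 + Real.exp (2*π) := by
            have h1 : (-lam).re ≤ ‖lam‖ := by
              calc (-lam).re ≤ |(-lam).re| := le_abs_self _
                _ ≤ ‖-lam‖ := by simpa using Complex.abs_re_le_norm (-lam)
                _ = ‖lam‖ := norm_neg _
            have h2 : ‖lam‖ ≤ 2*π := by
              rw [hlamnorm]
              calc r * τ ≤ π / Real.sin θ := hzM
                _ ≤ 2*π := hM2pi
            exact add_le_add_right (Real.exp_le_exp.mpr (le_trans h1 h2)) 1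
    have hgK : ‖g‖ ≤ K := by
      calc ‖g‖ ≤ ∑ j ∈ Finset.Icc 1 k, ‖(1 - Complex.exp (-lam)) ^ j / (j : ℂ)‖ := by
            rw [hg]; exact norm_sum_le _ _
        _ ≤ ∑ j ∈ Finset.Icc 1 k, B^6 := by
            apply Finset.sum_le_sum
            intro j hj
            obtain ⟨hj1, hjk⟩ := Finset.mem_Icc.mp hj
            rw [norm_div, norm_pow]
            have hden : (1:ℝ) ≤ ‖(j:ℂ)‖ := by
              rw [Complex.norm_natCast]; exact_mod_cast hj1
            calc ‖1 - Complex.exp (-lam)‖ ^ j / ‖(j:ℂ)‖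
                ≤ ‖1 - Complex.exp (-lam)‖ ^ j / 1 := by
                  apply div_le_div_of_nonneg_left _ one_pos hden
                  positivity
              _ = ‖1 - Complex.exp (-lam)‖ ^ j := div_one _
              _ ≤ B ^ j := pow_le_pow_left₀ (norm_nonneg _) hu j
              _ ≤ B ^ 6 := pow_le_pow_right₀ hB1 (by omega)
        _ = k * B^6 := by rw [Finset.sum_const, Nat.card_Icc]; simp
        _ ≤ 6 * B^6 := by
            have : (k:ℝ) ≤ 6 := by exact_mod_cast hk6
            nlinarith [pow_nonneg (by positivity : (0:ℝ) ≤ B) 6]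
        _ = K := by rw [hK]
    have hδK : ‖δ‖ ≤ 1024 * K * r := by
      have h1 : ‖δ‖ = ‖g‖ / τ := by
        rw [hδg, norm_mul, norm_div, norm_one, Complex.norm_real, Real.norm_eq_abs,
          abs_of_pos hτ]; ring
      have h2 : 1/τ ≤ 1024 * r := by
        rw [div_le_iff₀ hτ]
        have : 1/1024 < r * τ := by rw [← hlamnorm]; exact hcase
        nlinarith
      rw [h1, div_eq_mul_inv]
      calc ‖g‖ * τ⁻¹ ≤ K * (1024 * r) := by
            apply mul_le_mul hgK _ (by positivity) hKpos.le
            rw [← one_div]; exact h2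
        _ = 1024 * K * r := by ring
    -- crude bounds
    have hmα : (0:ℝ) ≤ (m:ℝ) - α := by
      have : (1:ℝ) ≤ (m:ℝ) := by exact_mod_cast hm1
      linarith [hα.2]
    have hT1 : ‖(δ^m) • R δ‖ ≤ c₀ * (1024*K)^6 * r^((m:ℝ)-α) := by
      rw [norm_smul (δ^m) (R δ), norm_pow]
      calc ‖δ‖^m * ‖R δ‖ ≤ ‖δ‖^m * (c₀ * ‖δ‖^(-α)) := by
            apply mul_le_mul_of_nonneg_left hRδ0 (by positivity)
        _ = c₀ * (‖δ‖^m * ‖δ‖^(-α)) := by ring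
        _ = c₀ * ‖δ‖^((m:ℝ)-α) := by
            rw [← Real.rpow_natCast ‖δ‖ m, ← Real.rpow_add hδpos]
            ring_nf
        _ ≤ c₀ * (1024*K*r)^((m:ℝ)-α) := by
            apply mul_le_mul_of_nonneg_left _ hc₀.le
            exact Real.rpow_le_rpow hδpos.le hδK hmα
        _ = c₀ * ((1024*K)^((m:ℝ)-α) * r^((m:ℝ)-α)) := by
            rw [Real.mul_rpow (by positivity) hrpos.le]
        _ ≤ c₀ * ((1024*K)^6 * r^((m:ℝ)-α)) := by
            apply mul_le_mul_of_nonneg_left _ hc₀.le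
            apply mul_le_mul_of_nonneg_right _ (Real.rpow_nonneg hrpos.le _)
            calc (1024*K)^((m:ℝ)-α) ≤ (1024*K)^((6:ℕ):ℝ) := by
                  apply Real.rpow_le_rpow_of_exponent_le (by nlinarith)
                  have : (m:ℝ) ≤ 6 := by exact_mod_cast le_trans hmk hk6
                  push_cast
                  linarith [hα.1]
              _ = (1024*K)^(6:ℕ) := Real.rpow_natCast _ 6
        _ = c₀ * (1024*K)^6 * r^((m:ℝ)-α) := by ring
    have hT2 : ‖(z^m) • R z‖ ≤ c₀ * r^((m:ℝ)-α) := by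
      rw [norm_smul (z^m) (R z), norm_pow, hznorm]
      calc r^m * ‖R z‖ ≤ r^m * (c₀ * r^(-α)) := by
            apply mul_le_mul_of_nonneg_left hRz (by positivity)
        _ = c₀ * (r^m * r^(-α)) := by ring
        _ = c₀ * r^((m:ℝ)-α) := by
            rw [← Real.rpow_natCast r m, ← Real.rpow_add hrpos]
            ring_nf
    have hsplit : r^((k:ℝ)+m-α) = r^(k:ℕ) * r^((m:ℝ)-α) := by
      rw [← Real.rpow_natCast r k, ← Real.rpow_add hrpos]
      congr 1; push_cast; ring
    have hRHSlow : c₀ * ((1024*K)^6 + 1) * r^((m:ℝ)-α) ≤ c * τ^k * r^((k:ℝ)+m-α) := by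
      rw [hsplit]
      have hτr : (1/1024:ℝ)^6 ≤ τ^k * r^k := by
        rw [← mul_pow]
        calc (1/1024:ℝ)^6 ≤ (1/1024:ℝ)^k :=
              pow_le_pow_of_le_one (by norm_num) (by norm_num) hk6
          _ ≤ (τ*r)^k := by
              apply pow_le_pow_left₀ (by norm_num)
              rw [mul_comm]
              have : 1/1024 < r * τ := by rw [← hlamnorm]; exact hcase
              linarith
      have hcB : c₀ * 1024^6 * ((1024*K)^6 + 1) ≤ c := by
        rw [hc]; nlinarith
      have key : c₀ * ((1024*K)^6 + 1) ≤ c * (τ^k * r^k) := by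
        calc c₀ * ((1024*K)^6 + 1)
            = (c₀ * 1024^6 * ((1024*K)^6 + 1)) * (1/1024:ℝ)^6 := by
              rw [div_pow, one_pow]; field_simp
          _ ≤ c * (τ^k * r^k) := by
              apply mul_le_mul hcB hτr (by positivity) hcpos.le
      calc c₀ * ((1024*K)^6 + 1) * r^((m:ℝ)-α)
          ≤ (c * (τ^k * r^k)) * r^((m:ℝ)-α) := by
            apply mul_le_mul_of_nonneg_right key (Real.rpow_nonneg hrpos.le _)
        _ = c * τ^k * (r^(k:ℕ) * r^((m:ℝ)-α)) := by ring
    calc ‖(δ^m) • R δ - (z^m) • R z‖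
        ≤ ‖(δ^m) • R δ‖ + ‖(z^m) • R z‖ := norm_sub_le _ _
      _ ≤ c₀ * (1024*K)^6 * r^((m:ℝ)-α) + c₀ * r^((m:ℝ)-α) := add_le_add hT1 hT2
      _ = c₀ * ((1024*K)^6 + 1) * r^((m:ℝ)-α) := by ring
      _ ≤ c * τ^k * r^((k:ℝ)+m-α) := hRHSlow
end

section
/- Let α ∈ (0,1), μ ∈ (−1,0), let j ≥ 1 be an integer, let t > 0, and let ψ : (0,t) → [0,∞] be measurable. Then ∫₀^t (t−s)^{α−1}·s^{μ−j}·(∫₀^s (s−w)^{j−1}·ψ(w) dw) ds ≤ B(α, (μ+1)/2)·t^{α+(μ−1)/2}·∫₀^t w^{(μ−1)/2}·ψ(w) dw, where B denotes the Euler Beta function. -/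
open MeasureTheory Set

lemma aux_integrable {p q t : ℝ} (hp : -1 < p) (hq : -1 < q) (ht : 0 < t) :
    IntervalIntegrable (fun x => (t - x) ^ p * x ^ q) volume 0 t := by
  have h1 : IntervalIntegrable (fun x => (t - x) ^ p * x ^ q) volume 0 (t / 2) := by
    apply IntervalIntegrable.continuousOn_mul
      (intervalIntegral.intervalIntegrable_rpow' hq)
    intro x hx
    rw [Set.uIcc_of_le (by linarith)] at hx
    exact ((Real.continuousAt_rpow_const _ _ (Or.inl (by simp only [Set.mem_Icc] at hx; intro h; simp only [Pi.sub_apply, id_eq] at h; linarith [hx.2]))).comp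
      ((continuous_const.sub continuous_id).continuousAt)).continuousWithinAt
  have h2' : IntervalIntegrable (fun x => (t - x) ^ p) volume (t / 2) t := by
    have h := ((intervalIntegral.intervalIntegrable_rpow' (a := 0) (b := t / 2) hp).comp_sub_left t).symm
    rw [show t - t / 2 = t / 2 by ring, sub_zero] at h
    exact h
  have h2 : IntervalIntegrable (fun x => (t - x) ^ p * x ^ q) volume (t / 2) t := by
    apply h2'.mul_continuousOn
    intro x hx
    rw [Set.uIcc_of_le (by linarith)] at hx
    exact ((Real.continuousAt_rpow_const _ _ (Or.inl (by simp only [Set.mem_Icc] at hx; simp only [id_eq]; intro h; linarith [hx.1]))).comp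
      continuous_id.continuousAt).continuousWithinAt
  exact h1.trans h2

/-- The Euler Beta function `B(x,y) = ∫₀^1 (1−s)^{x−1} s^{y−1} ds`. -/
noncomputable def betaFn (x y : ℝ) : ℝ :=
  ∫ s in (0 : ℝ)..1, (1 - s) ^ (x - 1) * s ^ (y - 1)

lemma key_eq {α c t : ℝ} (hα : 0 < α) (hα1 : α < 1) (hc : -1 < c) (hc0 : c < 0)
    (ht : 0 < t) :
    ∫⁻ s in Set.Ioo 0 t, ENNReal.ofReal ((t - s) ^ (α - 1) * s ^ c) =
      ENNReal.ofReal (betaFn α (c + 1) * t ^ (α + c)) := by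
  have hint : IntervalIntegrable (fun x => (t - x) ^ (α - 1) * x ^ c) volume 0 t :=
    aux_integrable (by linarith) hc ht
  have hIoo : IntegrableOn (fun x => (t - x) ^ (α - 1) * x ^ c) (Set.Ioo 0 t) := by
    have := (intervalIntegrable_iff_integrableOn_Ioc_of_le ht.le).1 hint
    exact this.mono_set Set.Ioo_subset_Ioc_self
  rw [← ofReal_integral_eq_lintegral_ofReal hIoo ?nn]
  case nn =>
    rw [Filter.EventuallyLE, ae_restrict_iff' measurableSet_Ioo]
    refine Filter.Eventually.of_forall fun s hs => ?_
    exact mul_nonneg (Real.rpow_nonneg (by linarith [hs.2]) _) (Real.rpow_nonneg hs.1.le _)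
  congr 1
  have h1 : ∫ s in Set.Ioo (0:ℝ) t, (t - s) ^ (α - 1) * s ^ c =
      ∫ s in (0:ℝ)..t, (t - s) ^ (α - 1) * s ^ c := by
    rw [intervalIntegral.integral_of_le ht.le, integral_Ioc_eq_integral_Ioo]
  have hsub := intervalIntegral.integral_comp_mul_left
    (a := 0) (b := 1) (c := t) (fun x => (t - x) ^ (α - 1) * x ^ c) ht.ne'
  simp only [mul_zero, mul_one, smul_eq_mul] at hsub
  have h2 : ∫ u in (0:ℝ)..1, (t - t * u) ^ (α - 1) * (t * u) ^ c =
      ∫ u in (0:ℝ)..1, t ^ (α - 1) * t ^ c * ((1 - u) ^ (α - 1) * u ^ c) := by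
    apply intervalIntegral.integral_congr
    intro u hu
    rw [Set.uIcc_of_le (by norm_num)] at hu
    dsimp only
    have h0u : 0 ≤ u := hu.1
    have hu1 : u ≤ 1 := hu.2
    have : t - t * u = t * (1 - u) := by ring
    rw [this, Real.mul_rpow ht.le (by linarith), Real.mul_rpow ht.le h0u]
    ring
  have h3 : ∫ u in (0:ℝ)..1, t ^ (α - 1) * t ^ c * ((1 - u) ^ (α - 1) * u ^ c) =
      t ^ (α - 1) * t ^ c * betaFn α (c + 1) := by
    rw [intervalIntegral.integral_const_mul, betaFn]
    norm_num
  have h4 : ∫ s in (0:ℝ)..t, (t - s) ^ (α - 1) * s ^ c =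
      t * (t ^ (α - 1) * t ^ c * betaFn α (c + 1)) := by
    rw [← h3, ← h2]
    rw [hsub]
    field_simp
  rw [h1, h4]
  rw [show betaFn α (c + 1) * t ^ (α + c) = t ^ (α + c) * betaFn α (c + 1) from mul_comm _ _]
  rw [← mul_assoc, ← mul_assoc]
  congr 2
  rw [show t * t ^ (α - 1) = t ^ (1:ℝ) * t ^ (α - 1) by rw [Real.rpow_one],
    ← Real.rpow_add ht, ← Real.rpow_add ht]
  congr 1
  ring

lemma swap_aux {f g : ℝ → ENNReal} (hf : Measurable f) (hg : Measurable g)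
    {t : ℝ} (ht : 0 < t) :
    ∫⁻ s in Set.Ioo 0 t, f s * ∫⁻ w in Set.Ioo 0 s, g w =
      ∫⁻ w in Set.Ioo 0 t, g w * ∫⁻ s in Set.Ioo w t, f s := by
  have hS : MeasurableSet {p : ℝ × ℝ | 0 < p.2 ∧ p.2 < p.1} :=
    (measurableSet_lt measurable_const measurable_snd).inter
      (measurableSet_lt measurable_snd measurable_fst)
  set G : ℝ → ℝ → ENNReal :=
    fun s w => {p : ℝ × ℝ | 0 < p.2 ∧ p.2 < p.1}.indicator (fun q => g q.2) (s, w) * f s with hG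
  have hA : ∫⁻ s in Set.Ioo 0 t, f s * ∫⁻ w in Set.Ioo 0 s, g w =
      ∫⁻ s in Set.Ioo 0 t, ∫⁻ w in Set.Ioo 0 t, G s w := by
    apply setLIntegral_congr_fun measurableSet_Ioo
    intro s hs
    have hind : ∀ w, G s w = (Set.Ioo (0:ℝ) s).indicator g w * f s := by
      intro w
      simp only [hG, Set.indicator_apply, Set.mem_setOf_eq, Set.mem_Ioo]
    simp only [hind]
    rw [lintegral_mul_const _ (hg.indicator measurableSet_Ioo),
      lintegral_indicator measurableSet_Ioo, Measure.restrict_restrict measurableSet_Ioo]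
    rw [show Set.Ioo (0:ℝ) s ∩ Set.Ioo 0 t = Set.Ioo 0 s by
      ext x; simp only [Set.mem_inter_iff, Set.mem_Ioo]
      exact ⟨fun h => h.1, fun h => ⟨h, h.1, h.2.trans hs.2⟩⟩]
    exact mul_comm _ _
  have hB : ∫⁻ w in Set.Ioo 0 t, ∫⁻ s in Set.Ioo 0 t, G s w =
      ∫⁻ w in Set.Ioo 0 t, g w * ∫⁻ s in Set.Ioo w t, f s := by
    apply setLIntegral_congr_fun measurableSet_Ioo
    intro w hw
    have hind : ∀ s, G s w = (Set.Ioi w).indicator (fun s => g w * f s) s := by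
      intro s
      simp only [hG, Set.indicator_apply, Set.mem_setOf_eq, Set.mem_Ioi]
      by_cases h : w < s
      · simp [h, hw.1]
      · simp [h]
    simp only [hind]
    rw [lintegral_indicator measurableSet_Ioi, Measure.restrict_restrict measurableSet_Ioi]
    rw [show Set.Ioi w ∩ Set.Ioo 0 t = Set.Ioo w t by
      ext x; simp only [Set.mem_inter_iff, Set.mem_Ioi, Set.mem_Ioo]
      exact ⟨fun h => ⟨h.1, h.2.2⟩, fun h => ⟨h.1, hw.1.trans h.1, h.2⟩⟩]
    exact lintegral_const_mul _ hf
  rw [hA, ← hB]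
  apply lintegral_lintegral_swap
  have : Function.uncurry G = fun z : ℝ × ℝ =>
      {p : ℝ × ℝ | 0 < p.2 ∧ p.2 < p.1}.indicator (fun q => g q.2) z * f z.1 := by
    ext z
    simp [Function.uncurry, hG]
  rw [this]
  exact (((hg.comp measurable_snd).indicator hS).mul (hf.comp measurable_fst)).aemeasurable

lemma pt_bound {α μ : ℝ} (hμ : μ ∈ Set.Ioo (-1 : ℝ) 0) {j : ℕ} (hj : 1 ≤ j)
    {t s w : ℝ} (hw : 0 < w) (hws : w < s) (hst : s < t) :
    (t - s) ^ (α - 1) * s ^ (μ - j) * (s - w) ^ (j - 1) ≤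
      (t - s) ^ (α - 1) * s ^ ((μ - 1) / 2) * w ^ ((μ - 1) / 2) := by
  have hs0 : (0:ℝ) < s := hw.trans hws
  have hA : (0:ℝ) ≤ (t - s) ^ (α - 1) := Real.rpow_nonneg (by linarith) _
  rw [mul_assoc, mul_assoc]
  refine mul_le_mul_of_nonneg_left ?_ hA
  have h1 : (s - w) ^ (j - 1) ≤ s ^ (j - 1) :=
    pow_le_pow_left₀ (by linarith) (by linarith) _
  have h2 : s ^ (μ - j) * (s : ℝ) ^ (j - 1 : ℕ) = s ^ ((μ - 1) / 2) * s ^ ((μ - 1) / 2) := by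
    rw [← Real.rpow_natCast s (j - 1), Nat.cast_sub hj, Nat.cast_one,
      ← Real.rpow_add hs0, ← Real.rpow_add hs0]
    congr 1; ring
  have h4 : s ^ ((μ - 1) / 2) ≤ w ^ ((μ - 1) / 2) :=
    Real.rpow_le_rpow_of_nonpos hw hws.le (by linarith [hμ.2])
  calc s ^ (μ - j) * (s - w) ^ (j - 1)
      ≤ s ^ (μ - j) * s ^ (j - 1) :=
        mul_le_mul_of_nonneg_left h1 (Real.rpow_nonneg hs0.le _)
    _ = s ^ ((μ - 1) / 2) * s ^ ((μ - 1) / 2) := h2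
    _ ≤ s ^ ((μ - 1) / 2) * w ^ ((μ - 1) / 2) :=
        mul_le_mul_of_nonneg_left h4 (Real.rpow_nonneg hs0.le _)

theorem stmt16 (α μ : ℝ) (hα : α ∈ Set.Ioo (0 : ℝ) 1) (hμ : μ ∈ Set.Ioo (-1 : ℝ) 0)
    (j : ℕ) (hj : 1 ≤ j) (t : ℝ) (ht : 0 < t) (ψ : ℝ → ENNReal) (hψ : Measurable ψ) :
    (∫⁻ s in Set.Ioo (0 : ℝ) t,
        ENNReal.ofReal ((t - s) ^ (α - 1) * s ^ (μ - j)) *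
          ∫⁻ w in Set.Ioo (0 : ℝ) s, ENNReal.ofReal ((s - w) ^ (j - 1)) * ψ w) ≤
      ENNReal.ofReal (betaFn α ((μ + 1) / 2) * t ^ (α + (μ - 1) / 2)) *
        ∫⁻ w in Set.Ioo (0 : ℝ) t, ENNReal.ofReal (w ^ ((μ - 1) / 2)) * ψ w := by
  set F : ℝ → ENNReal := fun s => ENNReal.ofReal ((t - s) ^ (α - 1) * s ^ ((μ - 1) / 2)) with hFdef
  set G : ℝ → ENNReal := fun w => ENNReal.ofReal (w ^ ((μ - 1) / 2)) * ψ w with hGdef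
  have hFm : Measurable F := by rw [hFdef]; fun_prop
  have hGm : Measurable G := by rw [hGdef]; fun_prop
  set C : ENNReal := ENNReal.ofReal (betaFn α ((μ + 1) / 2) * t ^ (α + (μ - 1) / 2)) with hCdef
  have hC : ∫⁻ s in Set.Ioo (0:ℝ) t, F s = C := by
    rw [hFdef, hCdef, key_eq hα.1 hα.2 (by linarith [hμ.1]) (by linarith [hμ.2]) ht,
      show (μ - 1) / 2 + 1 = (μ + 1) / 2 by ring]
  calc (∫⁻ s in Set.Ioo (0 : ℝ) t,
        ENNReal.ofReal ((t - s) ^ (α - 1) * s ^ (μ - j)) *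
          ∫⁻ w in Set.Ioo (0 : ℝ) s, ENNReal.ofReal ((s - w) ^ (j - 1)) * ψ w)
      ≤ ∫⁻ s in Set.Ioo (0:ℝ) t, F s * ∫⁻ w in Set.Ioo (0:ℝ) s, G w := by
        apply lintegral_mono_ae
        rw [ae_restrict_iff' measurableSet_Ioo]
        refine Filter.Eventually.of_forall fun s hs => ?_
        have hm1 : Measurable (fun w : ℝ => ENNReal.ofReal ((s - w) ^ (j - 1)) * ψ w) := by
          fun_prop
        rw [← lintegral_const_mul _ hm1, ← lintegral_const_mul _ hGm]
        apply lintegral_mono_ae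
        rw [ae_restrict_iff' measurableSet_Ioo]
        refine Filter.Eventually.of_forall fun w hw => ?_
        have hts : (0:ℝ) ≤ t - s := by linarith [hs.2]
        simp only [hFdef, hGdef]
        rw [← mul_assoc, ← mul_assoc,
          ← ENNReal.ofReal_mul (mul_nonneg (Real.rpow_nonneg hts _) (Real.rpow_nonneg hs.1.le _)),
          ← ENNReal.ofReal_mul (mul_nonneg (Real.rpow_nonneg hts _) (Real.rpow_nonneg hs.1.le _))]
        exact mul_le_mul_left
          (ENNReal.ofReal_le_ofReal (pt_bound hμ hj hw.1 hw.2 hs.2)) _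
    _ = ∫⁻ w in Set.Ioo (0:ℝ) t, G w * ∫⁻ s in Set.Ioo w t, F s := swap_aux hFm hGm ht
    _ ≤ ∫⁻ w in Set.Ioo (0:ℝ) t, G w * C := by
        apply lintegral_mono_ae
        rw [ae_restrict_iff' measurableSet_Ioo]
        refine Filter.Eventually.of_forall fun w hw => ?_
        refine mul_le_mul_right ?_ _
        rw [← hC]
        exact lintegral_mono_set (Set.Ioo_subset_Ioo hw.1.le le_rfl)
    _ = C * ∫⁻ w in Set.Ioo (0:ℝ) t, G w := by
        rw [lintegral_mul_const'' _ hGm.aemeasurable, mul_comm]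
end
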